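/- arXiv:1904.08962 — 4 statements merged into one kernel-verified Lean document; each statement's English description precedes it below -/
import Mathlib

section
/- (Convexity in belief.) Let V_w be the unique bounded fixed point of the Bellman operator T_w of the constrained restless single-armed bandit with stochastic availability. Then for each y ∈ {0,1} and each feasible action a (a ∈ {0,1} if y = 1, a = 0 if y = 0), the functions π ↦ V_w(π, y) and π ↦ L^aV_w(π, y) are convex on [0,1]. -/
open Set

noncomputable section

/-- Expected immediate reward (success probability) at belief `π`. -/
def rhoB (ρ0 ρ1 π : ℝ) : ℝ := π * ρ0 + (1 - π) * ρ1

/-- Belief update after a play resulting in success. -/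
def Gam1 (p00 p10 ρ0 ρ1 π : ℝ) : ℝ :=
  (π * ρ0 * p00 + (1 - π) * ρ1 * p10) / (π * ρ0 + (1 - π) * ρ1)

/-- Belief update after a play resulting in failure. -/
def Gam0 (p00 p10 ρ0 ρ1 π : ℝ) : ℝ :=
  (π * (1 - ρ0) * p00 + (1 - π) * (1 - ρ1) * p10) /
    (π * (1 - ρ0) + (1 - π) * (1 - ρ1))

/-- Belief update without observation (natural Markov evolution). -/
def gam (p00 p10 π : ℝ) : ℝ := π * p00 + (1 - π) * p10

/-- Action value of playing an available arm. -/
def Lact1 (p00 p10 ρ0 ρ1 β θ11 : ℝ) (V : ℝ → Bool → ℝ) (π : ℝ) : ℝ :=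
  rhoB ρ0 ρ1 π
    + β * rhoB ρ0 ρ1 π *
        (θ11 * V (Gam1 p00 p10 ρ0 ρ1 π) true +
          (1 - θ11) * V (Gam1 p00 p10 ρ0 ρ1 π) false)
    + β * (1 - rhoB ρ0 ρ1 π) *
        (θ11 * V (Gam0 p00 p10 ρ0 ρ1 π) true +
          (1 - θ11) * V (Gam0 p00 p10 ρ0 ρ1 π) false)

/-- Action value of not playing an available arm (subsidy `w`). -/
def Lact0a (p00 p10 β w θ01 : ℝ) (V : ℝ → Bool → ℝ) (π : ℝ) : ℝ :=
  w + β * (θ01 * V (gam p00 p10 π) true + (1 - θ01) * V (gam p00 p10 π) false)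

/-- Action value for an unavailable arm (subsidy `w`). -/
def Lact0u (p00 p10 β w θ00 : ℝ) (V : ℝ → Bool → ℝ) (π : ℝ) : ℝ :=
  w + β * (θ00 * V (gam p00 p10 π) true + (1 - θ00) * V (gam p00 p10 π) false)

/-- Bellman operator of the constrained restless single-armed bandit with
stochastic availability; availability `y` is encoded by `Bool`. -/
def TwOp (p00 p10 ρ0 ρ1 β w θ11 θ01 θ00 : ℝ) (V : ℝ → Bool → ℝ) : ℝ → Bool → ℝ :=
  fun π y =>
    if y then max (Lact1 p00 p10 ρ0 ρ1 β θ11 V π) (Lact0a p00 p10 β w θ01 V π)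
    else Lact0u p00 p10 β w θ00 V π

/-- Bounded on the belief space `[0,1] × {0,1}`. -/
def BddOnIcc (V : ℝ → Bool → ℝ) : Prop :=
  ∃ C : ℝ, ∀ π ∈ Icc (0:ℝ) 1, ∀ y : Bool, |V π y| ≤ C

/-- Fixed point of an operator on the belief space `[0,1] × {0,1}`. -/
def FixedOnIcc (T : (ℝ → Bool → ℝ) → ℝ → Bool → ℝ) (V : ℝ → Bool → ℝ) : Prop :=
  ∀ π ∈ Icc (0:ℝ) 1, ∀ y : Bool, T V π y = V π y


lemma convexOn_affine' (a b : ℝ) : ConvexOn ℝ (Icc (0:ℝ) 1) (fun π => a*π+b) := by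
  refine ⟨convex_Icc _ _, ?_⟩
  intro x _ z _ t u ht hu htu
  simp only [smul_eq_mul]
  apply le_of_eq
  linear_combination (-b) * htu

lemma mix_abs_le {θ d1 d2 Δ : ℝ} (h0 : 0 ≤ θ) (h1 : θ ≤ 1)
    (e1 : |d1| ≤ Δ) (e2 : |d2| ≤ Δ) : |θ * d1 + (1-θ) * d2| ≤ Δ := by
  rw [abs_le] at *
  constructor <;> nlinarith [e1.1, e1.2, e2.1, e2.2]

lemma convexOn_mix {f h : ℝ → ℝ} {θ : ℝ} (h0 : 0 ≤ θ) (h1 : θ ≤ 1)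
    (hf : ConvexOn ℝ (Icc (0:ℝ) 1) f) (hh : ConvexOn ℝ (Icc (0:ℝ) 1) h) :
    ConvexOn ℝ (Icc (0:ℝ) 1) (fun π => θ * f π + (1-θ) * h π) := by
  refine ⟨convex_Icc _ _, ?_⟩
  intro x hx z hz t u ht hu htu
  have Hf := hf.2 hx hz ht hu htu
  have Hh := hh.2 hx hz ht hu htu
  simp only [smul_eq_mul] at *
  nlinarith

lemma convexOn_comp_affine {g N : ℝ → ℝ}
    (hg : ConvexOn ℝ (Icc (0:ℝ) 1) g)
    (hNaff : ∀ x z t u : ℝ, t + u = 1 → N (t*x+u*z) = t * N x + u * N z)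
    (hR : ∀ π ∈ Icc (0:ℝ) 1, N π ∈ Icc (0:ℝ) 1) :
    ConvexOn ℝ (Icc (0:ℝ) 1) (fun π => g (N π)) := by
  refine ⟨convex_Icc _ _, ?_⟩
  intro x hx z hz t u ht hu htu
  simp only [smul_eq_mul]
  rw [hNaff x z t u htu]
  simpa using hg.2 (hR x hx) (hR z hz) ht hu htu

lemma convexOn_perspective {g D N : ℝ → ℝ}
    (hg : ConvexOn ℝ (Icc (0:ℝ) 1) g)
    (hDaff : ∀ x z t u : ℝ, t + u = 1 → D (t*x+u*z) = t * D x + u * D z)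
    (hNaff : ∀ x z t u : ℝ, t + u = 1 → N (t*x+u*z) = t * N x + u * N z)
    (hD : ∀ π ∈ Icc (0:ℝ) 1, 0 < D π)
    (hR : ∀ π ∈ Icc (0:ℝ) 1, N π / D π ∈ Icc (0:ℝ) 1) :
    ConvexOn ℝ (Icc (0:ℝ) 1) (fun π => D π * g (N π / D π)) := by
  refine ⟨convex_Icc _ _, ?_⟩
  intro x hx z hz t u ht hu htu
  simp only [smul_eq_mul]
  have hp : t*x+u*z ∈ Icc (0:ℝ) 1 := by
    have := (convex_Icc (0:ℝ) 1) hx hz ht hu htu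
    simpa using this
  have hDx := hD x hx
  have hDz := hD z hz
  have hDp : 0 < D (t*x+u*z) := hD _ hp
  have hDeq : D (t*x+u*z) = t * D x + u * D z := hDaff x z t u htu
  have hNeq : N (t*x+u*z) = t * N x + u * N z := hNaff x z t u htu
  have hs0 : 0 ≤ t * D x / D (t*x+u*z) := div_nonneg (mul_nonneg ht hDx.le) hDp.le
  have hs'0 : 0 ≤ u * D z / D (t*x+u*z) := div_nonneg (mul_nonneg hu hDz.le) hDp.le
  have hss : t * D x / D (t*x+u*z) + u * D z / D (t*x+u*z) = 1 := by
    field_simp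
    linarith [hDeq]
  have hratio : N (t*x+u*z) / D (t*x+u*z)
      = (t * D x / D (t*x+u*z)) * (N x / D x) + (u * D z / D (t*x+u*z)) * (N z / D z) := by
    rw [hNeq]
    field_simp
  have hgle := hg.2 (hR x hx) (hR z hz) hs0 hs'0 hss
  simp only [smul_eq_mul] at hgle
  rw [hratio]
  calc D (t*x+u*z) * g ((t * D x / D (t*x+u*z)) * (N x / D x) + (u * D z / D (t*x+u*z)) * (N z / D z))
      ≤ D (t*x+u*z) * ((t * D x / D (t*x+u*z)) * g (N x / D x) + (u * D z / D (t*x+u*z)) * g (N z / D z)) :=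
        mul_le_mul_of_nonneg_left hgle hDp.le
    _ = t * (D x * g (N x / D x)) + u * (D z * g (N z / D z)) := by
        field_simp
section
variable (p00 p10 ρ0 ρ1 β w θ11 θ01 θ00 : ℝ)
variable (hp00 : p00 ∈ Icc (0:ℝ) 1) (hp10 : p10 ∈ Icc (0:ℝ) 1)
variable (hρ0 : 0 < ρ0) (hρ01 : ρ0 < ρ1) (hρ1 : ρ1 < 1)

include hp00 hp10 in
lemma gam_mem : ∀ π ∈ Icc (0:ℝ) 1, gam p00 p10 π ∈ Icc (0:ℝ) 1 := by
  intro π hπ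
  obtain ⟨h0, h1⟩ := hπ
  constructor
  · unfold gam
    nlinarith [mul_nonneg h0 hp00.1, mul_nonneg (by linarith : (0:ℝ) ≤ 1 - π) hp10.1]
  · unfold gam
    nlinarith [mul_nonneg h0 (by linarith [hp00.2] : (0:ℝ) ≤ 1 - p00),
      mul_nonneg (by linarith : (0:ℝ) ≤ 1 - π) (by linarith [hp10.2] : (0:ℝ) ≤ 1 - p10)]

include hρ0 hρ01 in
lemma rho_pos : ∀ π ∈ Icc (0:ℝ) 1, 0 < rhoB ρ0 ρ1 π := by
  intro π hπ; obtain ⟨h0, h1⟩ := hπ; unfold rhoB; nlinarith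

include hρ01 hρ1 in
lemma rho_lt_one : ∀ π ∈ Icc (0:ℝ) 1, rhoB ρ0 ρ1 π < 1 := by
  intro π hπ; obtain ⟨h0, h1⟩ := hπ; unfold rhoB; nlinarith

include hp00 hp10 hρ0 hρ01 in
lemma Gam1_mem : ∀ π ∈ Icc (0:ℝ) 1, Gam1 p00 p10 ρ0 ρ1 π ∈ Icc (0:ℝ) 1 := by
  intro π hπ
  obtain ⟨h0, h1⟩ := hπ
  have hπ1 : (0:ℝ) ≤ 1 - π := by linarith
  have ha : (0:ℝ) ≤ π * ρ0 := mul_nonneg h0 hρ0.le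
  have hb : (0:ℝ) ≤ (1 - π) * ρ1 := mul_nonneg hπ1 (by linarith)
  have hden : 0 < π * ρ0 + (1 - π) * ρ1 := by nlinarith
  have hnum0 : 0 ≤ π * ρ0 * p00 + (1 - π) * ρ1 * p10 :=
    add_nonneg (mul_nonneg ha hp00.1) (mul_nonneg hb hp10.1)
  have hnd : π * ρ0 * p00 + (1 - π) * ρ1 * p10 ≤ π * ρ0 + (1 - π) * ρ1 := by
    nlinarith [mul_nonneg ha (by linarith [hp00.2] : (0:ℝ) ≤ 1 - p00),
      mul_nonneg hb (by linarith [hp10.2] : (0:ℝ) ≤ 1 - p10)]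
  exact ⟨div_nonneg hnum0 hden.le, (div_le_one hden).2 hnd⟩

include hp00 hp10 hρ01 hρ1 in
lemma Gam0_mem : ∀ π ∈ Icc (0:ℝ) 1, Gam0 p00 p10 ρ0 ρ1 π ∈ Icc (0:ℝ) 1 := by
  intro π hπ
  obtain ⟨h0, h1⟩ := hπ
  have hπ1 : (0:ℝ) ≤ 1 - π := by linarith
  have ha : (0:ℝ) ≤ π * (1 - ρ0) := mul_nonneg h0 (by linarith)
  have hb : (0:ℝ) ≤ (1 - π) * (1 - ρ1) := mul_nonneg hπ1 (by linarith)
  have hden : 0 < π * (1 - ρ0) + (1 - π) * (1 - ρ1) := by nlinarith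
  have hnum0 : 0 ≤ π * (1 - ρ0) * p00 + (1 - π) * (1 - ρ1) * p10 :=
    add_nonneg (mul_nonneg ha hp00.1) (mul_nonneg hb hp10.1)
  have hnd : π * (1 - ρ0) * p00 + (1 - π) * (1 - ρ1) * p10
      ≤ π * (1 - ρ0) + (1 - π) * (1 - ρ1) := by
    nlinarith [mul_nonneg ha (by linarith [hp00.2] : (0:ℝ) ≤ 1 - p00),
      mul_nonneg hb (by linarith [hp10.2] : (0:ℝ) ≤ 1 - p10)]
  exact ⟨div_nonneg hnum0 hden.le, (div_le_one hden).2 hnd⟩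

end
section
variable (p00 p10 ρ0 ρ1 β w θ11 θ01 θ00 : ℝ)
variable (hp00 : p00 ∈ Icc (0:ℝ) 1) (hp10 : p10 ∈ Icc (0:ℝ) 1)
variable (hρ0 : 0 < ρ0) (hρ01 : ρ0 < ρ1) (hρ1 : ρ1 < 1)
variable (hβ : β ∈ Ioo (0:ℝ) 1)
variable (hθ11 : θ11 ∈ Icc (0:ℝ) 1) (hθ01 : θ01 ∈ Icc (0:ℝ) 1) (hθ00 : θ00 ∈ Icc (0:ℝ) 1)

include hp00 hp10 hρ0 hρ01 hρ1 hβ hθ11 hθ01 hθ00 in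
lemma TwOp_convex (U : ℝ → Bool → ℝ)
    (hU : ∀ y : Bool, ConvexOn ℝ (Icc (0:ℝ) 1) (fun π => U π y)) :
    ConvexOn ℝ (Icc (0:ℝ) 1) (fun π => Lact1 p00 p10 ρ0 ρ1 β θ11 U π)
    ∧ ConvexOn ℝ (Icc (0:ℝ) 1) (fun π => Lact0a p00 p10 β w θ01 U π)
    ∧ ConvexOn ℝ (Icc (0:ℝ) 1) (fun π => Lact0u p00 p10 β w θ00 U π)
    ∧ ∀ y : Bool, ConvexOn ℝ (Icc (0:ℝ) 1) (fun π => TwOp p00 p10 ρ0 ρ1 β w θ11 θ01 θ00 U π y) := by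
  have hgamaff : ∀ x z t u : ℝ, t + u = 1 →
      gam p00 p10 (t*x+u*z) = t * gam p00 p10 x + u * gam p00 p10 z := by
    intro x z t u htu; unfold gam; linear_combination (-p10) * htu
  -- mixed continuation functions
  have hg11 : ConvexOn ℝ (Icc (0:ℝ) 1) (fun q => θ11 * U q true + (1-θ11) * U q false) :=
    convexOn_mix hθ11.1 hθ11.2 (hU true) (hU false)
  have hg01 : ConvexOn ℝ (Icc (0:ℝ) 1) (fun q => θ01 * U q true + (1-θ01) * U q false) :=
    convexOn_mix hθ01.1 hθ01.2 (hU true) (hU false)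
  have hg00 : ConvexOn ℝ (Icc (0:ℝ) 1) (fun q => θ00 * U q true + (1-θ00) * U q false) :=
    convexOn_mix hθ00.1 hθ00.2 (hU true) (hU false)
  -- L0 action values
  have hcomp01 : ConvexOn ℝ (Icc (0:ℝ) 1)
      (fun π => θ01 * U (gam p00 p10 π) true + (1-θ01) * U (gam p00 p10 π) false) :=
    convexOn_comp_affine hg01 hgamaff (gam_mem p00 p10 hp00 hp10)
  have hcomp00 : ConvexOn ℝ (Icc (0:ℝ) 1)
      (fun π => θ00 * U (gam p00 p10 π) true + (1-θ00) * U (gam p00 p10 π) false) :=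
    convexOn_comp_affine hg00 hgamaff (gam_mem p00 p10 hp00 hp10)
  have hL0a : ConvexOn ℝ (Icc (0:ℝ) 1) (fun π => Lact0a p00 p10 β w θ01 U π) := by
    refine ⟨convex_Icc _ _, ?_⟩
    intro x hx z hz t u ht hu htu
    have H := hcomp01.2 hx hz ht hu htu
    simp only [smul_eq_mul] at *
    simp only [Lact0a]
    have hw : t * w + u * w = w := by rw [← add_mul, htu, one_mul]
    linarith [mul_le_mul_of_nonneg_left H hβ.1.le]
  have hL0u : ConvexOn ℝ (Icc (0:ℝ) 1) (fun π => Lact0u p00 p10 β w θ00 U π) := by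
    refine ⟨convex_Icc _ _, ?_⟩
    intro x hx z hz t u ht hu htu
    have H := hcomp00.2 hx hz ht hu htu
    simp only [smul_eq_mul] at *
    simp only [Lact0u]
    have hw : t * w + u * w = w := by rw [← add_mul, htu, one_mul]
    linarith [mul_le_mul_of_nonneg_left H hβ.1.le]
  -- L1 : perspective terms
  have haffD1 : ∀ x z t u : ℝ, t + u = 1 →
      ((t*x+u*z) * ρ0 + (1-(t*x+u*z)) * ρ1) = t * (x*ρ0+(1-x)*ρ1) + u * (z*ρ0+(1-z)*ρ1) := by
    intro x z t u htu; linear_combination (-ρ1) * htu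
  have haffN1 : ∀ x z t u : ℝ, t + u = 1 →
      ((t*x+u*z) * ρ0 * p00 + (1-(t*x+u*z)) * ρ1 * p10)
        = t * (x*ρ0*p00+(1-x)*ρ1*p10) + u * (z*ρ0*p00+(1-z)*ρ1*p10) := by
    intro x z t u htu; linear_combination (-(ρ1*p10)) * htu
  have haffD0 : ∀ x z t u : ℝ, t + u = 1 →
      ((t*x+u*z) * (1-ρ0) + (1-(t*x+u*z)) * (1-ρ1))
        = t * (x*(1-ρ0)+(1-x)*(1-ρ1)) + u * (z*(1-ρ0)+(1-z)*(1-ρ1)) := by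
    intro x z t u htu; linear_combination (-(1-ρ1)) * htu
  have haffN0 : ∀ x z t u : ℝ, t + u = 1 →
      ((t*x+u*z) * (1-ρ0) * p00 + (1-(t*x+u*z)) * (1-ρ1) * p10)
        = t * (x*(1-ρ0)*p00+(1-x)*(1-ρ1)*p10) + u * (z*(1-ρ0)*p00+(1-z)*(1-ρ1)*p10) := by
    intro x z t u htu; linear_combination (-((1-ρ1)*p10)) * htu
  have hD0pos : ∀ π ∈ Icc (0:ℝ) 1, 0 < π * (1-ρ0) + (1-π) * (1-ρ1) := by
    intro π hπ; obtain ⟨h0, h1⟩ := hπ; nlinarith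
  have hP1 : ConvexOn ℝ (Icc (0:ℝ) 1)
      (fun π => (π * ρ0 + (1-π) * ρ1) *
        (θ11 * U ((π * ρ0 * p00 + (1-π) * ρ1 * p10) / (π * ρ0 + (1-π) * ρ1)) true +
          (1-θ11) * U ((π * ρ0 * p00 + (1-π) * ρ1 * p10) / (π * ρ0 + (1-π) * ρ1)) false)) :=
    convexOn_perspective (D := fun q => q * ρ0 + (1-q) * ρ1)
      (N := fun q => q * ρ0 * p00 + (1-q) * ρ1 * p10) hg11
      (fun x z t u htu => haffD1 x z t u htu)
      (fun x z t u htu => haffN1 x z t u htu)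
      (fun π hπ => rho_pos ρ0 ρ1 hρ0 hρ01 π hπ)
      (fun π hπ => Gam1_mem p00 p10 ρ0 ρ1 hp00 hp10 hρ0 hρ01 π hπ)
  have hP0 : ConvexOn ℝ (Icc (0:ℝ) 1)
      (fun π => (π * (1-ρ0) + (1-π) * (1-ρ1)) *
        (θ11 * U ((π * (1-ρ0) * p00 + (1-π) * (1-ρ1) * p10) /
            (π * (1-ρ0) + (1-π) * (1-ρ1))) true +
          (1-θ11) * U ((π * (1-ρ0) * p00 + (1-π) * (1-ρ1) * p10) /
            (π * (1-ρ0) + (1-π) * (1-ρ1))) false)) :=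
    convexOn_perspective (D := fun q => q * (1-ρ0) + (1-q) * (1-ρ1))
      (N := fun q => q * (1-ρ0) * p00 + (1-q) * (1-ρ1) * p10) hg11
      (fun x z t u htu => haffD0 x z t u htu)
      (fun x z t u htu => haffN0 x z t u htu)
      (fun π hπ => hD0pos π hπ)
      (fun π hπ => Gam0_mem p00 p10 ρ0 ρ1 hp00 hp10 hρ01 hρ1 π hπ)
  have hL1 : ConvexOn ℝ (Icc (0:ℝ) 1) (fun π => Lact1 p00 p10 ρ0 ρ1 β θ11 U π) := by
    refine ⟨convex_Icc _ _, ?_⟩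
    intro x hx z hz t u ht hu htu
    have H1 := hP1.2 hx hz ht hu htu
    have H0 := hP0.2 hx hz ht hu htu
    have Haff := (convexOn_affine' (ρ0 - ρ1) ρ1).2 hx hz ht hu htu
    simp only [smul_eq_mul] at *
    simp only [Lact1, rhoB, Gam1, Gam0]
    linarith [mul_le_mul_of_nonneg_left H1 hβ.1.le, mul_le_mul_of_nonneg_left H0 hβ.1.le, Haff]
  refine ⟨hL1, hL0a, hL0u, ?_⟩
  intro y
  cases y
  · simpa only [TwOp, Bool.false_eq_true, if_false] using hL0u
  · have := hL1.sup hL0a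
    exact this
end
section
variable (p00 p10 ρ0 ρ1 β w θ11 θ01 θ00 : ℝ)
variable (hp00 : p00 ∈ Icc (0:ℝ) 1) (hp10 : p10 ∈ Icc (0:ℝ) 1)
variable (hρ0 : 0 < ρ0) (hρ01 : ρ0 < ρ1) (hρ1 : ρ1 < 1)
variable (hβ : β ∈ Ioo (0:ℝ) 1)
variable (hθ11 : θ11 ∈ Icc (0:ℝ) 1) (hθ01 : θ01 ∈ Icc (0:ℝ) 1) (hθ00 : θ00 ∈ Icc (0:ℝ) 1)

include hp00 hp10 hρ0 hρ01 hρ1 hβ hθ11 hθ01 hθ00 in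
lemma Tw_contract (U W' : ℝ → Bool → ℝ) (Δ : ℝ) (hΔ : 0 ≤ Δ)
    (h : ∀ π ∈ Icc (0:ℝ) 1, ∀ y : Bool, |U π y - W' π y| ≤ Δ) :
    ∀ π ∈ Icc (0:ℝ) 1, ∀ y : Bool,
      |TwOp p00 p10 ρ0 ρ1 β w θ11 θ01 θ00 U π y
        - TwOp p00 p10 ρ0 ρ1 β w θ11 θ01 θ00 W' π y| ≤ β * Δ := by
  intro π hπ y
  have hγ := gam_mem p00 p10 hp00 hp10 π hπ
  have hG1 := Gam1_mem p00 p10 ρ0 ρ1 hp00 hp10 hρ0 hρ01 π hπ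
  have hG0 := Gam0_mem p00 p10 ρ0 ρ1 hp00 hp10 hρ01 hρ1 π hπ
  have hρπ0 := rho_pos ρ0 ρ1 hρ0 hρ01 π hπ
  have hρπ1 := rho_lt_one ρ0 ρ1 hρ01 hρ1 π hπ
  have hL1 : |Lact1 p00 p10 ρ0 ρ1 β θ11 U π - Lact1 p00 p10 ρ0 ρ1 β θ11 W' π| ≤ β * Δ := by
    have m1 : |θ11 * (U (Gam1 p00 p10 ρ0 ρ1 π) true - W' (Gam1 p00 p10 ρ0 ρ1 π) true)
        + (1-θ11) * (U (Gam1 p00 p10 ρ0 ρ1 π) false - W' (Gam1 p00 p10 ρ0 ρ1 π) false)| ≤ Δ :=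
      mix_abs_le hθ11.1 hθ11.2 (h _ hG1 true) (h _ hG1 false)
    have m0 : |θ11 * (U (Gam0 p00 p10 ρ0 ρ1 π) true - W' (Gam0 p00 p10 ρ0 ρ1 π) true)
        + (1-θ11) * (U (Gam0 p00 p10 ρ0 ρ1 π) false - W' (Gam0 p00 p10 ρ0 ρ1 π) false)| ≤ Δ :=
      mix_abs_le hθ11.1 hθ11.2 (h _ hG0 true) (h _ hG0 false)
    have m2 : |rhoB ρ0 ρ1 π *
          (θ11 * (U (Gam1 p00 p10 ρ0 ρ1 π) true - W' (Gam1 p00 p10 ρ0 ρ1 π) true)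
            + (1-θ11) * (U (Gam1 p00 p10 ρ0 ρ1 π) false - W' (Gam1 p00 p10 ρ0 ρ1 π) false))
        + (1 - rhoB ρ0 ρ1 π) *
          (θ11 * (U (Gam0 p00 p10 ρ0 ρ1 π) true - W' (Gam0 p00 p10 ρ0 ρ1 π) true)
            + (1-θ11) * (U (Gam0 p00 p10 ρ0 ρ1 π) false - W' (Gam0 p00 p10 ρ0 ρ1 π) false))| ≤ Δ :=
      mix_abs_le hρπ0.le hρπ1.le m1 m0
    have hid : Lact1 p00 p10 ρ0 ρ1 β θ11 U π - Lact1 p00 p10 ρ0 ρ1 β θ11 W' π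
        = β * (rhoB ρ0 ρ1 π *
          (θ11 * (U (Gam1 p00 p10 ρ0 ρ1 π) true - W' (Gam1 p00 p10 ρ0 ρ1 π) true)
            + (1-θ11) * (U (Gam1 p00 p10 ρ0 ρ1 π) false - W' (Gam1 p00 p10 ρ0 ρ1 π) false))
        + (1 - rhoB ρ0 ρ1 π) *
          (θ11 * (U (Gam0 p00 p10 ρ0 ρ1 π) true - W' (Gam0 p00 p10 ρ0 ρ1 π) true)
            + (1-θ11) * (U (Gam0 p00 p10 ρ0 ρ1 π) false - W' (Gam0 p00 p10 ρ0 ρ1 π) false))) := by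
      simp only [Lact1]; ring
    rw [hid, abs_mul, abs_of_pos hβ.1]
    exact mul_le_mul_of_nonneg_left m2 hβ.1.le
  have hL0a : |Lact0a p00 p10 β w θ01 U π - Lact0a p00 p10 β w θ01 W' π| ≤ β * Δ := by
    have m1 : |θ01 * (U (gam p00 p10 π) true - W' (gam p00 p10 π) true)
        + (1-θ01) * (U (gam p00 p10 π) false - W' (gam p00 p10 π) false)| ≤ Δ :=
      mix_abs_le hθ01.1 hθ01.2 (h _ hγ true) (h _ hγ false)
    have hid : Lact0a p00 p10 β w θ01 U π - Lact0a p00 p10 β w θ01 W' π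
        = β * (θ01 * (U (gam p00 p10 π) true - W' (gam p00 p10 π) true)
          + (1-θ01) * (U (gam p00 p10 π) false - W' (gam p00 p10 π) false)) := by
      simp only [Lact0a]; ring
    rw [hid, abs_mul, abs_of_pos hβ.1]
    exact mul_le_mul_of_nonneg_left m1 hβ.1.le
  have hL0u : |Lact0u p00 p10 β w θ00 U π - Lact0u p00 p10 β w θ00 W' π| ≤ β * Δ := by
    have m1 : |θ00 * (U (gam p00 p10 π) true - W' (gam p00 p10 π) true)
        + (1-θ00) * (U (gam p00 p10 π) false - W' (gam p00 p10 π) false)| ≤ Δ :=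
      mix_abs_le hθ00.1 hθ00.2 (h _ hγ true) (h _ hγ false)
    have hid : Lact0u p00 p10 β w θ00 U π - Lact0u p00 p10 β w θ00 W' π
        = β * (θ00 * (U (gam p00 p10 π) true - W' (gam p00 p10 π) true)
          + (1-θ00) * (U (gam p00 p10 π) false - W' (gam p00 p10 π) false)) := by
      simp only [Lact0u]; ring
    rw [hid, abs_mul, abs_of_pos hβ.1]
    exact mul_le_mul_of_nonneg_left m1 hβ.1.le
  cases y
  · simpa only [TwOp, Bool.false_eq_true, if_false] using hL0u
  · simp only [TwOp, if_true]
    exact le_trans (abs_max_sub_max_le_max _ _ _ _) (max_le hL1 hL0a)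
end

/-- Value-iteration sequence started at the zero function. -/
def bIter (p00 p10 ρ0 ρ1 β w θ11 θ01 θ00 : ℝ) : ℕ → ℝ → Bool → ℝ
  | 0 => fun _ _ => 0
  | n+1 => TwOp p00 p10 ρ0 ρ1 β w θ11 θ01 θ00 (bIter p00 p10 ρ0 ρ1 β w θ11 θ01 θ00 n)

/-- **Convexity in belief.** The value function `V_w` (the
unique bounded fixed point of `T_w`) and each feasible action-value function
are convex in the belief `π` on `[0,1]`, for each availability `y`. -/
theorem stmt5 (p00 p10 ρ0 ρ1 β w θ11 θ01 θ00 : ℝ)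
    (hp00 : p00 ∈ Icc (0:ℝ) 1) (hp10 : p10 ∈ Icc (0:ℝ) 1)
    (hρ0 : 0 < ρ0) (hρ01 : ρ0 < ρ1) (hρ1 : ρ1 < 1)
    (hβ : β ∈ Ioo (0:ℝ) 1)
    (hθ11 : θ11 ∈ Icc (0:ℝ) 1) (hθ01 : θ01 ∈ Icc (0:ℝ) 1) (hθ00 : θ00 ∈ Icc (0:ℝ) 1)
    (V : ℝ → Bool → ℝ) (hVb : BddOnIcc V)
    (hVfix : FixedOnIcc (TwOp p00 p10 ρ0 ρ1 β w θ11 θ01 θ00) V) :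
    (∀ y : Bool, ConvexOn ℝ (Icc (0:ℝ) 1) (fun π => V π y))
    ∧ ConvexOn ℝ (Icc (0:ℝ) 1) (fun π => Lact1 p00 p10 ρ0 ρ1 β θ11 V π)
    ∧ ConvexOn ℝ (Icc (0:ℝ) 1) (fun π => Lact0a p00 p10 β w θ01 V π)
    ∧ ConvexOn ℝ (Icc (0:ℝ) 1) (fun π => Lact0u p00 p10 β w θ00 V π) := by
  obtain ⟨C, hC⟩ := hVb
  have hC0 : 0 ≤ C := le_trans (abs_nonneg _) (hC 0 ⟨le_refl _, zero_le_one⟩ true)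
  -- error bound for iterates
  have hbound : ∀ n : ℕ, ∀ π ∈ Icc (0:ℝ) 1, ∀ y : Bool,
      |bIter p00 p10 ρ0 ρ1 β w θ11 θ01 θ00 n π y - V π y| ≤ β ^ n * C := by
    intro n
    induction n with
    | zero =>
      intro π hπ y
      simp only [bIter, pow_zero, one_mul, zero_sub, abs_neg]
      exact hC π hπ y
    | succ n ih =>
      intro π hπ y
      have key := Tw_contract p00 p10 ρ0 ρ1 β w θ11 θ01 θ00 hp00 hp10 hρ0 hρ01 hρ1 hβ
        hθ11 hθ01 hθ00 (bIter p00 p10 ρ0 ρ1 β w θ11 θ01 θ00 n) V (β ^ n * C)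
        (mul_nonneg (pow_nonneg hβ.1.le n) hC0) ih π hπ y
      rw [hVfix π hπ y] at key
      calc |bIter p00 p10 ρ0 ρ1 β w θ11 θ01 θ00 (n+1) π y - V π y|
          ≤ β * (β ^ n * C) := key
        _ = β ^ (n+1) * C := by ring
  -- convexity of the iterates
  have hconv : ∀ n : ℕ, ∀ y : Bool,
      ConvexOn ℝ (Icc (0:ℝ) 1) (fun π => bIter p00 p10 ρ0 ρ1 β w θ11 θ01 θ00 n π y) := by
    intro n
    induction n with
    | zero => intro y; simpa only [bIter] using convexOn_const (0:ℝ) (convex_Icc (0:ℝ) 1)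
    | succ n ih =>
      exact (TwOp_convex p00 p10 ρ0 ρ1 β w θ11 θ01 θ00 hp00 hp10 hρ0 hρ01 hρ1 hβ
        hθ11 hθ01 hθ00 _ ih).2.2.2
  -- convexity of V as a pointwise limit
  have hβpow : Filter.Tendsto (fun n : ℕ => β ^ n) Filter.atTop (nhds 0) :=
    tendsto_pow_atTop_nhds_zero_of_lt_one hβ.1.le hβ.2
  have hVconv : ∀ y : Bool, ConvexOn ℝ (Icc (0:ℝ) 1) (fun π => V π y) := by
    intro y
    refine ⟨convex_Icc _ _, ?_⟩
    intro x hx z hz t u ht hu htu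
    simp only [smul_eq_mul]
    have hp : t*x+u*z ∈ Icc (0:ℝ) 1 := by
      have := (convex_Icc (0:ℝ) 1) hx hz ht hu htu
      simpa using this
    have key : ∀ n : ℕ, V (t*x+u*z) y ≤ t * V x y + u * V z y + 2 * (β ^ n * C) := by
      intro n
      set e := β ^ n * C with he
      have h1 := abs_le.1 (hbound n _ hp y)
      have h2 := abs_le.1 (hbound n x hx y)
      have h3 := abs_le.1 (hbound n z hz y)
      have h4 := (hconv n y).2 hx hz ht hu htu
      simp only [smul_eq_mul] at h4
      have e2 := mul_le_mul_of_nonneg_left h2.2 ht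
      have e3 := mul_le_mul_of_nonneg_left h3.2 hu
      have hsum : t * e + u * e = e := by rw [← add_mul, htu, one_mul]
      nlinarith [h1.1, e2, e3, h4, mul_nonneg ht (mul_nonneg (pow_nonneg hβ.1.le n) hC0),
        mul_nonneg hu (mul_nonneg (pow_nonneg hβ.1.le n) hC0)]
    have hlim : Filter.Tendsto (fun n : ℕ => t * V x y + u * V z y + 2 * (β ^ n * C))
        Filter.atTop (nhds (t * V x y + u * V z y + 2 * (0 * C))) :=
      Filter.Tendsto.const_add _ (((hβpow.mul_const C).const_mul 2))
    have := ge_of_tendsto' hlim key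
    simpa using this
  refine ⟨hVconv, ?_⟩
  have := TwOp_convex p00 p10 ρ0 ρ1 β w θ11 θ01 θ00 hp00 hp10 hρ0 hρ01 hρ1 hβ
    hθ11 hθ01 hθ00 V hVconv
  exact ⟨this.1, this.2.1, this.2.2.1⟩
end
end

section
/- (Lipschitz bound in belief.) Assume either 0 < p00 − p10 < 1/2 or 0 < p10 − p00 < 1, and set κ = 1/(1 − β|p00 − p10|). Then the functions π ↦ L0V_w(π,1), π ↦ L1V_w(π,1) and π ↦ V_w(π,1) are Lipschitz on [0,1] with constant κ(ρ1 − ρ0): for all π, π' ∈ [0,1], |V_w(π,1) − V_w(π',1)| ≤ κ(ρ1 − ρ0)|π − π'|, and likewise for L0V_w(·,1) and L1V_w(·,1). -/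
open Set Filter Topology

noncomputable section

/- ### Auxiliary lemmas -/

lemma cvx_abs (θ A B m : ℝ) (hθ0 : 0 ≤ θ) (hθ1 : θ ≤ 1) (hA : |A| ≤ m) (hB : |B| ≤ m) :
    |θ * A + (1 - θ) * B| ≤ m := by
  calc |θ * A + (1 - θ) * B| ≤ |θ * A| + |(1 - θ) * B| := abs_add_le _ _
    _ = θ * |A| + (1 - θ) * |B| := by
        rw [abs_mul, abs_mul, abs_of_nonneg hθ0,
          abs_of_nonneg (show (0:ℝ) ≤ 1 - θ from by linarith)]
    _ ≤ θ * m + (1 - θ) * m :=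
        add_le_add (mul_le_mul_of_nonneg_left hA hθ0)
          (mul_le_mul_of_nonneg_left hB (by linarith))
    _ = m := by ring

lemma mem_gam {p00 p10 π : ℝ} (hp00 : p00 ∈ Icc (0:ℝ) 1) (hp10 : p10 ∈ Icc (0:ℝ) 1)
    (hπ : π ∈ Icc (0:ℝ) 1) : gam p00 p10 π ∈ Icc (0:ℝ) 1 := by
  obtain ⟨h0, h1⟩ := hπ
  have e1 : 0 ≤ π * p00 := mul_nonneg h0 hp00.1
  have e2 : 0 ≤ (1 - π) * p10 := mul_nonneg (by linarith) hp10.1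
  have e3 : 0 ≤ π * (1 - p00) := mul_nonneg h0 (by linarith [hp00.2])
  have e4 : 0 ≤ (1 - π) * (1 - p10) := mul_nonneg (by linarith) (by linarith [hp10.2])
  constructor <;> unfold gam <;> nlinarith

lemma rhoB_mem {ρ0 ρ1 π : ℝ} (hρ0 : 0 < ρ0) (hρ01 : ρ0 < ρ1) (hρ1 : ρ1 < 1)
    (hπ : π ∈ Icc (0:ℝ) 1) : 0 < rhoB ρ0 ρ1 π ∧ rhoB ρ0 ρ1 π < 1 := by
  obtain ⟨h0, h1⟩ := hπ
  constructor <;> unfold rhoB <;> nlinarith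

lemma mem_Gam1 {p00 p10 ρ0 ρ1 π : ℝ} (hp00 : p00 ∈ Icc (0:ℝ) 1) (hp10 : p10 ∈ Icc (0:ℝ) 1)
    (hρ0 : 0 < ρ0) (hρ01 : ρ0 < ρ1) (hρ1 : ρ1 < 1) (hπ : π ∈ Icc (0:ℝ) 1) :
    Gam1 p00 p10 ρ0 ρ1 π ∈ Icc (0:ℝ) 1 := by
  obtain ⟨h0, h1⟩ := hπ
  have hden : 0 < π * ρ0 + (1 - π) * ρ1 := by nlinarith
  have e1 : 0 ≤ π * ρ0 * p00 := mul_nonneg (mul_nonneg h0 hρ0.le) hp00.1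
  have e2 : 0 ≤ (1 - π) * ρ1 * p10 :=
    mul_nonneg (mul_nonneg (by linarith) (by linarith)) hp10.1
  have e3 : 0 ≤ π * ρ0 * (1 - p00) := mul_nonneg (mul_nonneg h0 hρ0.le) (by linarith [hp00.2])
  have e4 : 0 ≤ (1 - π) * ρ1 * (1 - p10) :=
    mul_nonneg (mul_nonneg (by linarith) (by linarith)) (by linarith [hp10.2])
  unfold Gam1
  constructor
  · exact div_nonneg (by linarith) hden.le
  · rw [div_le_one hden]; nlinarith

lemma mem_Gam0 {p00 p10 ρ0 ρ1 π : ℝ} (hp00 : p00 ∈ Icc (0:ℝ) 1) (hp10 : p10 ∈ Icc (0:ℝ) 1)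
    (hρ0 : 0 < ρ0) (hρ01 : ρ0 < ρ1) (hρ1 : ρ1 < 1) (hπ : π ∈ Icc (0:ℝ) 1) :
    Gam0 p00 p10 ρ0 ρ1 π ∈ Icc (0:ℝ) 1 := by
  obtain ⟨h0, h1⟩ := hπ
  have hden : 0 < π * (1 - ρ0) + (1 - π) * (1 - ρ1) := by nlinarith
  have e1 : 0 ≤ π * (1 - ρ0) * p00 :=
    mul_nonneg (mul_nonneg h0 (by linarith)) hp00.1
  have e2 : 0 ≤ (1 - π) * (1 - ρ1) * p10 :=
    mul_nonneg (mul_nonneg (by linarith) (by linarith)) hp10.1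
  have e3 : 0 ≤ π * (1 - ρ0) * (1 - p00) :=
    mul_nonneg (mul_nonneg h0 (by linarith)) (by linarith [hp00.2])
  have e4 : 0 ≤ (1 - π) * (1 - ρ1) * (1 - p10) :=
    mul_nonneg (mul_nonneg (by linarith) (by linarith)) (by linarith [hp10.2])
  unfold Gam0
  constructor
  · exact div_nonneg (by linarith) hden.le
  · rw [div_le_one hden]; nlinarith

/-- Key expectation lemma: the "observation averaged" operator contracts the
Lipschitz constant by `|p00 - p10|`. -/
lemma Flem (p00 p10 ρ0 ρ1 : ℝ) (hp00 : p00 ∈ Icc (0:ℝ) 1) (hp10 : p10 ∈ Icc (0:ℝ) 1)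
    (hρ0 : 0 < ρ0) (hρ01 : ρ0 < ρ1) (hρ1 : ρ1 < 1) (c : ℝ) (hc : 0 ≤ c)
    (W : ℝ → ℝ) (hW : ∀ x ∈ Icc (0:ℝ) 1, ∀ x' ∈ Icc (0:ℝ) 1, |W x - W x'| ≤ c * |x - x'|)
    (π π' : ℝ) (hπ : π ∈ Icc (0:ℝ) 1) (hπ' : π' ∈ Icc (0:ℝ) 1) :
    |(rhoB ρ0 ρ1 π * W (Gam1 p00 p10 ρ0 ρ1 π) + (1 - rhoB ρ0 ρ1 π) * W (Gam0 p00 p10 ρ0 ρ1 π))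
      - (rhoB ρ0 ρ1 π' * W (Gam1 p00 p10 ρ0 ρ1 π')
          + (1 - rhoB ρ0 ρ1 π') * W (Gam0 p00 p10 ρ0 ρ1 π'))|
      ≤ c * |p00 - p10| * |π - π'| := by
  obtain ⟨h0, h1⟩ := hπ
  obtain ⟨h0', h1'⟩ := hπ'
  have hR : 0 < π * ρ0 + (1 - π) * ρ1 := by nlinarith
  have hS : 0 < π * (1 - ρ0) + (1 - π) * (1 - ρ1) := by nlinarith
  have hR' : 0 < π' * ρ0 + (1 - π') * ρ1 := by nlinarith
  have hS' : 0 < π' * (1 - ρ0) + (1 - π') * (1 - ρ1) := by nlinarith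
  have hrb' := rhoB_mem hρ0 hρ01 hρ1 ⟨h0', h1'⟩
  -- exact difference formulas
  have e10 : Gam0 p00 p10 ρ0 ρ1 π - Gam1 p00 p10 ρ0 ρ1 π
      = (p00 - p10) * (π * (1 - π) * (ρ1 - ρ0))
        / ((π * ρ0 + (1 - π) * ρ1) * (π * (1 - ρ0) + (1 - π) * (1 - ρ1))) := by
    unfold Gam0 Gam1
    field_simp
    ring
  have e11 : Gam1 p00 p10 ρ0 ρ1 π - Gam1 p00 p10 ρ0 ρ1 π'
      = (p00 - p10) * (ρ0 * ρ1) * (π - π')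
        / ((π * ρ0 + (1 - π) * ρ1) * (π' * ρ0 + (1 - π') * ρ1)) := by
    unfold Gam1
    rw [div_sub_div _ _ hR.ne' hR'.ne']
    congr 1; ring
  have e00 : Gam0 p00 p10 ρ0 ρ1 π - Gam0 p00 p10 ρ0 ρ1 π'
      = (p00 - p10) * ((1 - ρ0) * (1 - ρ1)) * (π - π')
        / ((π * (1 - ρ0) + (1 - π) * (1 - ρ1)) * (π' * (1 - ρ0) + (1 - π') * (1 - ρ1))) := by
    unfold Gam0
    rw [div_sub_div _ _ hS.ne' hS'.ne']
    congr 1; ring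
  -- absolute-value versions
  have a10 : |Gam0 p00 p10 ρ0 ρ1 π - Gam1 p00 p10 ρ0 ρ1 π|
      = |p00 - p10| * (π * (1 - π) * (ρ1 - ρ0))
        / ((π * ρ0 + (1 - π) * ρ1) * (π * (1 - ρ0) + (1 - π) * (1 - ρ1))) := by
    rw [e10, abs_div, abs_mul,
      abs_of_nonneg (show (0:ℝ) ≤ π * (1 - π) * (ρ1 - ρ0) by
        apply mul_nonneg (mul_nonneg h0 (by linarith)) (by linarith)),
      abs_of_nonneg (mul_nonneg hR.le hS.le)]
  have a11 : |Gam1 p00 p10 ρ0 ρ1 π - Gam1 p00 p10 ρ0 ρ1 π'|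
      = |p00 - p10| * (ρ0 * ρ1) * |π - π'|
        / ((π * ρ0 + (1 - π) * ρ1) * (π' * ρ0 + (1 - π') * ρ1)) := by
    rw [e11, abs_div, abs_mul, abs_mul,
      abs_of_nonneg (show (0:ℝ) ≤ ρ0 * ρ1 by nlinarith),
      abs_of_nonneg (mul_nonneg hR.le hR'.le)]
  have a00 : |Gam0 p00 p10 ρ0 ρ1 π - Gam0 p00 p10 ρ0 ρ1 π'|
      = |p00 - p10| * ((1 - ρ0) * (1 - ρ1)) * |π - π'|
        / ((π * (1 - ρ0) + (1 - π) * (1 - ρ1)) * (π' * (1 - ρ0) + (1 - π') * (1 - ρ1))) := by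
    rw [e00, abs_div, abs_mul, abs_mul,
      abs_of_nonneg (show (0:ℝ) ≤ (1 - ρ0) * (1 - ρ1) by nlinarith),
      abs_of_nonneg (mul_nonneg hS.le hS'.le)]
  -- Lipschitz bounds on W differences
  have b10 : |W (Gam0 p00 p10 ρ0 ρ1 π) - W (Gam1 p00 p10 ρ0 ρ1 π)|
      ≤ c * (|p00 - p10| * (π * (1 - π) * (ρ1 - ρ0))
        / ((π * ρ0 + (1 - π) * ρ1) * (π * (1 - ρ0) + (1 - π) * (1 - ρ1)))) := by
    have := hW _ (mem_Gam0 hp00 hp10 hρ0 hρ01 hρ1 ⟨h0, h1⟩)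
      _ (mem_Gam1 hp00 hp10 hρ0 hρ01 hρ1 ⟨h0, h1⟩)
    rwa [a10] at this
  have b11 : |W (Gam1 p00 p10 ρ0 ρ1 π) - W (Gam1 p00 p10 ρ0 ρ1 π')|
      ≤ c * (|p00 - p10| * (ρ0 * ρ1) * |π - π'|
        / ((π * ρ0 + (1 - π) * ρ1) * (π' * ρ0 + (1 - π') * ρ1))) := by
    have := hW _ (mem_Gam1 hp00 hp10 hρ0 hρ01 hρ1 ⟨h0, h1⟩)
      _ (mem_Gam1 hp00 hp10 hρ0 hρ01 hρ1 ⟨h0', h1'⟩)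
    rwa [a11] at this
  have b00 : |W (Gam0 p00 p10 ρ0 ρ1 π) - W (Gam0 p00 p10 ρ0 ρ1 π')|
      ≤ c * (|p00 - p10| * ((1 - ρ0) * (1 - ρ1)) * |π - π'|
        / ((π * (1 - ρ0) + (1 - π) * (1 - ρ1)) * (π' * (1 - ρ0) + (1 - π') * (1 - ρ1)))) := by
    have := hW _ (mem_Gam0 hp00 hp10 hρ0 hρ01 hρ1 ⟨h0, h1⟩)
      _ (mem_Gam0 hp00 hp10 hρ0 hρ01 hρ1 ⟨h0', h1'⟩)
    rwa [a00] at this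
  -- exact decomposition of the difference
  have key : (rhoB ρ0 ρ1 π * W (Gam1 p00 p10 ρ0 ρ1 π)
        + (1 - rhoB ρ0 ρ1 π) * W (Gam0 p00 p10 ρ0 ρ1 π))
      - (rhoB ρ0 ρ1 π' * W (Gam1 p00 p10 ρ0 ρ1 π')
        + (1 - rhoB ρ0 ρ1 π') * W (Gam0 p00 p10 ρ0 ρ1 π'))
      = (π - π') * (ρ1 - ρ0) * (W (Gam0 p00 p10 ρ0 ρ1 π) - W (Gam1 p00 p10 ρ0 ρ1 π))
        + rhoB ρ0 ρ1 π' * (W (Gam1 p00 p10 ρ0 ρ1 π) - W (Gam1 p00 p10 ρ0 ρ1 π'))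
        + (1 - rhoB ρ0 ρ1 π') * (W (Gam0 p00 p10 ρ0 ρ1 π) - W (Gam0 p00 p10 ρ0 ρ1 π')) := by
    unfold rhoB; ring
  rw [key]
  have t1 : |(π - π') * (ρ1 - ρ0) * (W (Gam0 p00 p10 ρ0 ρ1 π) - W (Gam1 p00 p10 ρ0 ρ1 π))|
      ≤ |π - π'| * (ρ1 - ρ0) * (c * (|p00 - p10| * (π * (1 - π) * (ρ1 - ρ0))
        / ((π * ρ0 + (1 - π) * ρ1) * (π * (1 - ρ0) + (1 - π) * (1 - ρ1))))) := by
    rw [abs_mul, abs_mul, abs_of_nonneg (show (0:ℝ) ≤ ρ1 - ρ0 by linarith)]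
    exact mul_le_mul_of_nonneg_left b10
      (mul_nonneg (abs_nonneg _) (by linarith))
  have t2 : |rhoB ρ0 ρ1 π' * (W (Gam1 p00 p10 ρ0 ρ1 π) - W (Gam1 p00 p10 ρ0 ρ1 π'))|
      ≤ rhoB ρ0 ρ1 π' * (c * (|p00 - p10| * (ρ0 * ρ1) * |π - π'|
        / ((π * ρ0 + (1 - π) * ρ1) * (π' * ρ0 + (1 - π') * ρ1)))) := by
    rw [abs_mul, abs_of_nonneg hrb'.1.le]
    exact mul_le_mul_of_nonneg_left b11 hrb'.1.le
  have t3 : |(1 - rhoB ρ0 ρ1 π') * (W (Gam0 p00 p10 ρ0 ρ1 π) - W (Gam0 p00 p10 ρ0 ρ1 π'))|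
      ≤ (1 - rhoB ρ0 ρ1 π') * (c * (|p00 - p10| * ((1 - ρ0) * (1 - ρ1)) * |π - π'|
        / ((π * (1 - ρ0) + (1 - π) * (1 - ρ1)) * (π' * (1 - ρ0) + (1 - π') * (1 - ρ1))))) := by
    rw [abs_mul, abs_of_nonneg (by linarith [hrb'.2])]
    exact mul_le_mul_of_nonneg_left b00 (by linarith [hrb'.2])
  calc |(π - π') * (ρ1 - ρ0) * (W (Gam0 p00 p10 ρ0 ρ1 π) - W (Gam1 p00 p10 ρ0 ρ1 π))
        + rhoB ρ0 ρ1 π' * (W (Gam1 p00 p10 ρ0 ρ1 π) - W (Gam1 p00 p10 ρ0 ρ1 π'))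
        + (1 - rhoB ρ0 ρ1 π') * (W (Gam0 p00 p10 ρ0 ρ1 π) - W (Gam0 p00 p10 ρ0 ρ1 π'))|
      ≤ _ + _ + _ := abs_add_three _ _ _
    _ ≤ |π - π'| * (ρ1 - ρ0) * (c * (|p00 - p10| * (π * (1 - π) * (ρ1 - ρ0))
          / ((π * ρ0 + (1 - π) * ρ1) * (π * (1 - ρ0) + (1 - π) * (1 - ρ1)))))
        + rhoB ρ0 ρ1 π' * (c * (|p00 - p10| * (ρ0 * ρ1) * |π - π'|
          / ((π * ρ0 + (1 - π) * ρ1) * (π' * ρ0 + (1 - π') * ρ1))))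
        + (1 - rhoB ρ0 ρ1 π') * (c * (|p00 - p10| * ((1 - ρ0) * (1 - ρ1)) * |π - π'|
          / ((π * (1 - ρ0) + (1 - π) * (1 - ρ1)) * (π' * (1 - ρ0) + (1 - π') * (1 - ρ1))))) :=
        add_le_add (add_le_add t1 t2) t3
    _ = c * |p00 - p10| * |π - π'| := by
        unfold rhoB
        rw [show 1 - (π' * ρ0 + (1 - π') * ρ1) = π' * (1 - ρ0) + (1 - π') * (1 - ρ1) by ring]
        generalize hRd : π * ρ0 + (1 - π) * ρ1 = R at *
        generalize hSd : π * (1 - ρ0) + (1 - π) * (1 - ρ1) = S at *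
        generalize hRd' : π' * ρ0 + (1 - π') * ρ1 = R' at *
        generalize hSd' : π' * (1 - ρ0) + (1 - π') * (1 - ρ1) = S' at *
        field_simp
        rw [← hRd, ← hSd]
        ring

/-- Lipschitz step for the passive action values. -/
lemma stepL0 (p00 p10 β w θ c : ℝ) (hp00 : p00 ∈ Icc (0:ℝ) 1) (hp10 : p10 ∈ Icc (0:ℝ) 1)
    (hβ0 : 0 ≤ β) (hθ : θ ∈ Icc (0:ℝ) 1) (U : ℝ → Bool → ℝ)
    (hU : ∀ x ∈ Icc (0:ℝ) 1, ∀ x' ∈ Icc (0:ℝ) 1, ∀ y, |U x y - U x' y| ≤ c * |x - x'|)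
    {π π' : ℝ} (hπ : π ∈ Icc (0:ℝ) 1) (hπ' : π' ∈ Icc (0:ℝ) 1) :
    |Lact0a p00 p10 β w θ U π - Lact0a p00 p10 β w θ U π'|
      ≤ β * (c * (|p00 - p10| * |π - π'|)) := by
  have hg : |gam p00 p10 π - gam p00 p10 π'| = |p00 - p10| * |π - π'| := by
    rw [show gam p00 p10 π - gam p00 p10 π' = (p00 - p10) * (π - π') by unfold gam; ring,
      abs_mul]
  have hA := hU _ (mem_gam hp00 hp10 hπ) _ (mem_gam hp00 hp10 hπ') true
  have hB := hU _ (mem_gam hp00 hp10 hπ) _ (mem_gam hp00 hp10 hπ') false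
  rw [hg] at hA hB
  rw [show Lact0a p00 p10 β w θ U π - Lact0a p00 p10 β w θ U π'
      = β * (θ * (U (gam p00 p10 π) true - U (gam p00 p10 π') true)
          + (1 - θ) * (U (gam p00 p10 π) false - U (gam p00 p10 π') false)) from by
        unfold Lact0a; ring,
    abs_mul, abs_of_nonneg hβ0]
  exact mul_le_mul_of_nonneg_left (cvx_abs _ _ _ _ hθ.1 hθ.2 hA hB) hβ0

/-- Lipschitz step for the active action value. -/
lemma stepL1 (p00 p10 ρ0 ρ1 β θ11 c : ℝ) (hp00 : p00 ∈ Icc (0:ℝ) 1) (hp10 : p10 ∈ Icc (0:ℝ) 1)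
    (hρ0 : 0 < ρ0) (hρ01 : ρ0 < ρ1) (hρ1 : ρ1 < 1) (hβ0 : 0 ≤ β)
    (hθ : θ11 ∈ Icc (0:ℝ) 1) (hc : 0 ≤ c) (U : ℝ → Bool → ℝ)
    (hU : ∀ x ∈ Icc (0:ℝ) 1, ∀ x' ∈ Icc (0:ℝ) 1, ∀ y, |U x y - U x' y| ≤ c * |x - x'|)
    {π π' : ℝ} (hπ : π ∈ Icc (0:ℝ) 1) (hπ' : π' ∈ Icc (0:ℝ) 1) :
    |Lact1 p00 p10 ρ0 ρ1 β θ11 U π - Lact1 p00 p10 ρ0 ρ1 β θ11 U π'|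
      ≤ (ρ1 - ρ0) * |π - π'| + β * (c * (|p00 - p10| * |π - π'|)) := by
  have hW : ∀ x ∈ Icc (0:ℝ) 1, ∀ x' ∈ Icc (0:ℝ) 1,
      |(θ11 * U x true + (1 - θ11) * U x false)
        - (θ11 * U x' true + (1 - θ11) * U x' false)| ≤ c * |x - x'| := by
    intro x hx x' hx'
    rw [show (θ11 * U x true + (1 - θ11) * U x false)
        - (θ11 * U x' true + (1 - θ11) * U x' false)
        = θ11 * (U x true - U x' true) + (1 - θ11) * (U x false - U x' false) by ring]
    exact cvx_abs _ _ _ _ hθ.1 hθ.2 (hU x hx x' hx' true) (hU x hx x' hx' false)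
  have hF : |(rhoB ρ0 ρ1 π * (θ11 * U (Gam1 p00 p10 ρ0 ρ1 π) true
          + (1 - θ11) * U (Gam1 p00 p10 ρ0 ρ1 π) false)
        + (1 - rhoB ρ0 ρ1 π) * (θ11 * U (Gam0 p00 p10 ρ0 ρ1 π) true
          + (1 - θ11) * U (Gam0 p00 p10 ρ0 ρ1 π) false))
      - (rhoB ρ0 ρ1 π' * (θ11 * U (Gam1 p00 p10 ρ0 ρ1 π') true
          + (1 - θ11) * U (Gam1 p00 p10 ρ0 ρ1 π') false)
        + (1 - rhoB ρ0 ρ1 π') * (θ11 * U (Gam0 p00 p10 ρ0 ρ1 π') true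
          + (1 - θ11) * U (Gam0 p00 p10 ρ0 ρ1 π') false))|
      ≤ c * |p00 - p10| * |π - π'| :=
    Flem p00 p10 ρ0 ρ1 hp00 hp10 hρ0 hρ01 hρ1 c hc
      (fun x => θ11 * U x true + (1 - θ11) * U x false) hW π π' hπ hπ'
  have hrr : |rhoB ρ0 ρ1 π - rhoB ρ0 ρ1 π'| = (ρ1 - ρ0) * |π - π'| := by
    rw [show rhoB ρ0 ρ1 π - rhoB ρ0 ρ1 π' = (ρ1 - ρ0) * (π' - π) by unfold rhoB; ring,
      abs_mul, abs_of_nonneg (show (0:ℝ) ≤ ρ1 - ρ0 by linarith), abs_sub_comm π' π]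
  rw [show Lact1 p00 p10 ρ0 ρ1 β θ11 U π - Lact1 p00 p10 ρ0 ρ1 β θ11 U π'
      = (rhoB ρ0 ρ1 π - rhoB ρ0 ρ1 π')
        + β * ((rhoB ρ0 ρ1 π * (θ11 * U (Gam1 p00 p10 ρ0 ρ1 π) true
            + (1 - θ11) * U (Gam1 p00 p10 ρ0 ρ1 π) false)
          + (1 - rhoB ρ0 ρ1 π) * (θ11 * U (Gam0 p00 p10 ρ0 ρ1 π) true
            + (1 - θ11) * U (Gam0 p00 p10 ρ0 ρ1 π) false))
        - (rhoB ρ0 ρ1 π' * (θ11 * U (Gam1 p00 p10 ρ0 ρ1 π') true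
            + (1 - θ11) * U (Gam1 p00 p10 ρ0 ρ1 π') false)
          + (1 - rhoB ρ0 ρ1 π') * (θ11 * U (Gam0 p00 p10 ρ0 ρ1 π') true
            + (1 - θ11) * U (Gam0 p00 p10 ρ0 ρ1 π') false))) from by
      unfold Lact1; ring]
  refine le_trans (abs_add_le _ _) ?_
  rw [hrr, abs_mul, abs_of_nonneg hβ0]
  exact add_le_add_right
    (mul_le_mul_of_nonneg_left (hF.trans (le_of_eq (mul_assoc c _ _))) hβ0) _

/-- Contraction of the Bellman operator in sup norm over `[0,1] × Bool`. -/
lemma contractT (p00 p10 ρ0 ρ1 β w θ11 θ01 θ00 : ℝ)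
    (hp00 : p00 ∈ Icc (0:ℝ) 1) (hp10 : p10 ∈ Icc (0:ℝ) 1)
    (hρ0 : 0 < ρ0) (hρ01 : ρ0 < ρ1) (hρ1 : ρ1 < 1) (hβ0 : 0 ≤ β)
    (hθ11 : θ11 ∈ Icc (0:ℝ) 1) (hθ01 : θ01 ∈ Icc (0:ℝ) 1) (hθ00 : θ00 ∈ Icc (0:ℝ) 1)
    (U U' : ℝ → Bool → ℝ) (m : ℝ)
    (hm : ∀ x ∈ Icc (0:ℝ) 1, ∀ y, |U x y - U' x y| ≤ m) :
    ∀ π ∈ Icc (0:ℝ) 1, ∀ y,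
      |TwOp p00 p10 ρ0 ρ1 β w θ11 θ01 θ00 U π y
        - TwOp p00 p10 ρ0 ρ1 β w θ11 θ01 θ00 U' π y| ≤ β * m := by
  intro π hπ y
  have hg := mem_gam hp00 hp10 hπ
  have h0a : |Lact0a p00 p10 β w θ01 U π - Lact0a p00 p10 β w θ01 U' π| ≤ β * m := by
    rw [show Lact0a p00 p10 β w θ01 U π - Lact0a p00 p10 β w θ01 U' π
        = β * (θ01 * (U (gam p00 p10 π) true - U' (gam p00 p10 π) true)
            + (1 - θ01) * (U (gam p00 p10 π) false - U' (gam p00 p10 π) false)) from by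
          unfold Lact0a; ring,
      abs_mul, abs_of_nonneg hβ0]
    exact mul_le_mul_of_nonneg_left
      (cvx_abs _ _ _ _ hθ01.1 hθ01.2 (hm _ hg true) (hm _ hg false)) hβ0
  cases y with
  | false =>
    show |Lact0u p00 p10 β w θ00 U π - Lact0u p00 p10 β w θ00 U' π| ≤ β * m
    rw [show Lact0u p00 p10 β w θ00 U π - Lact0u p00 p10 β w θ00 U' π
        = β * (θ00 * (U (gam p00 p10 π) true - U' (gam p00 p10 π) true)
            + (1 - θ00) * (U (gam p00 p10 π) false - U' (gam p00 p10 π) false)) from by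
          unfold Lact0u; ring,
      abs_mul, abs_of_nonneg hβ0]
    exact mul_le_mul_of_nonneg_left
      (cvx_abs _ _ _ _ hθ00.1 hθ00.2 (hm _ hg true) (hm _ hg false)) hβ0
  | true =>
    show |max (Lact1 p00 p10 ρ0 ρ1 β θ11 U π) (Lact0a p00 p10 β w θ01 U π)
        - max (Lact1 p00 p10 ρ0 ρ1 β θ11 U' π) (Lact0a p00 p10 β w θ01 U' π)| ≤ β * m
    refine le_trans (abs_max_sub_max_le_max _ _ _ _) (max_le ?_ h0a)
    have hrb := rhoB_mem hρ0 hρ01 hρ1 hπ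
    have hG1 := mem_Gam1 hp00 hp10 hρ0 hρ01 hρ1 hπ
    have hG0 := mem_Gam0 hp00 hp10 hρ0 hρ01 hρ1 hπ
    rw [show Lact1 p00 p10 ρ0 ρ1 β θ11 U π - Lact1 p00 p10 ρ0 ρ1 β θ11 U' π
        = β * (rhoB ρ0 ρ1 π
            * (θ11 * (U (Gam1 p00 p10 ρ0 ρ1 π) true - U' (Gam1 p00 p10 ρ0 ρ1 π) true)
              + (1 - θ11) * (U (Gam1 p00 p10 ρ0 ρ1 π) false - U' (Gam1 p00 p10 ρ0 ρ1 π) false))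
          + (1 - rhoB ρ0 ρ1 π)
            * (θ11 * (U (Gam0 p00 p10 ρ0 ρ1 π) true - U' (Gam0 p00 p10 ρ0 ρ1 π) true)
              + (1 - θ11) * (U (Gam0 p00 p10 ρ0 ρ1 π) false
                  - U' (Gam0 p00 p10 ρ0 ρ1 π) false))) from by
          unfold Lact1; ring,
      abs_mul, abs_of_nonneg hβ0]
    refine mul_le_mul_of_nonneg_left ?_ hβ0
    exact cvx_abs _ _ _ _ hrb.1.le hrb.2.le
      (cvx_abs _ _ _ _ hθ11.1 hθ11.2 (hm _ hG1 true) (hm _ hG1 false))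
      (cvx_abs _ _ _ _ hθ11.1 hθ11.2 (hm _ hG0 true) (hm _ hG0 false))

/-- **Lipschitz bound in belief.** Under
`0 < p00 − p10 < 1/2` or `0 < p10 − p00 < 1`, with
`κ = 1/(1 − β|p00 − p10|)`, the maps `π ↦ L0 V_w(π,1)`, `π ↦ L1 V_w(π,1)`
and `π ↦ V_w(π,1)` are Lipschitz on `[0,1]` with constant `κ(ρ1 − ρ0)`. -/
theorem stmt7 (p00 p10 ρ0 ρ1 β w θ11 θ01 θ00 : ℝ)
    (hp00 : p00 ∈ Icc (0:ℝ) 1) (hp10 : p10 ∈ Icc (0:ℝ) 1)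
    (hρ0 : 0 < ρ0) (hρ01 : ρ0 < ρ1) (hρ1 : ρ1 < 1)
    (hβ : β ∈ Ioo (0:ℝ) 1)
    (hθ11 : θ11 ∈ Icc (0:ℝ) 1) (hθ01 : θ01 ∈ Icc (0:ℝ) 1) (hθ00 : θ00 ∈ Icc (0:ℝ) 1)
    (hp : (0 < p00 - p10 ∧ p00 - p10 < 1/2) ∨ (0 < p10 - p00 ∧ p10 - p00 < 1))
    (V : ℝ → Bool → ℝ) (hVb : BddOnIcc V)
    (hVfix : FixedOnIcc (TwOp p00 p10 ρ0 ρ1 β w θ11 θ01 θ00) V) :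
    ∀ π ∈ Icc (0:ℝ) 1, ∀ π' ∈ Icc (0:ℝ) 1,
      |Lact0a p00 p10 β w θ01 V π - Lact0a p00 p10 β w θ01 V π'|
        ≤ (1 / (1 - β * |p00 - p10|)) * (ρ1 - ρ0) * |π - π'|
      ∧ |Lact1 p00 p10 ρ0 ρ1 β θ11 V π - Lact1 p00 p10 ρ0 ρ1 β θ11 V π'|
        ≤ (1 / (1 - β * |p00 - p10|)) * (ρ1 - ρ0) * |π - π'|
      ∧ |V π true - V π' true|
        ≤ (1 / (1 - β * |p00 - p10|)) * (ρ1 - ρ0) * |π - π'| := by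
  obtain ⟨C, hC⟩ := hVb
  have hβ0 : 0 ≤ β := hβ.1.le
  have hd1 : |p00 - p10| ≤ 1 :=
    abs_le.mpr ⟨by linarith [hp00.1, hp10.2], by linarith [hp00.2, hp10.1]⟩
  have hbd : β * |p00 - p10| < 1 :=
    lt_of_le_of_lt (by nlinarith [abs_nonneg (p00 - p10)]) hβ.2
  have h1bd : 0 < 1 - β * |p00 - p10| := by linarith
  set K := 1 / (1 - β * |p00 - p10|) * (ρ1 - ρ0) with hKdef
  have hK0 : 0 ≤ K := by
    rw [hKdef]
    exact mul_nonneg (le_of_lt (div_pos one_pos h1bd)) (by linarith)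
  have hKid : (ρ1 - ρ0) + β * |p00 - p10| * K = K := by
    rw [hKdef]
    field_simp
    ring
  have hβdK : ∀ Δ : ℝ, 0 ≤ Δ → β * (K * (|p00 - p10| * Δ)) ≤ K * Δ := by
    intro Δ hΔ
    nlinarith [mul_nonneg (mul_nonneg hK0 hΔ) h1bd.le]
  have hL1K : ∀ Δ : ℝ, (ρ1 - ρ0) * Δ + β * (K * (|p00 - p10| * Δ)) = K * Δ := by
    intro Δ
    calc (ρ1 - ρ0) * Δ + β * (K * (|p00 - p10| * Δ))
        = ((ρ1 - ρ0) + β * |p00 - p10| * K) * Δ := by ring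
      _ = K * Δ := by rw [hKid]
  -- the Bellman operator preserves `K`-Lipschitz on the belief space
  have Tstep : ∀ U : ℝ → Bool → ℝ,
      (∀ x ∈ Icc (0:ℝ) 1, ∀ x' ∈ Icc (0:ℝ) 1, ∀ y, |U x y - U x' y| ≤ K * |x - x'|) →
      ∀ x ∈ Icc (0:ℝ) 1, ∀ x' ∈ Icc (0:ℝ) 1, ∀ y,
        |TwOp p00 p10 ρ0 ρ1 β w θ11 θ01 θ00 U x y
          - TwOp p00 p10 ρ0 ρ1 β w θ11 θ01 θ00 U x' y| ≤ K * |x - x'| := by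
    intro U hU x hx x' hx' y
    cases y with
    | false =>
      show |Lact0a p00 p10 β w θ00 U x - Lact0a p00 p10 β w θ00 U x'| ≤ K * |x - x'|
      exact le_trans (stepL0 p00 p10 β w θ00 K hp00 hp10 hβ0 hθ00 U hU hx hx')
        (hβdK _ (abs_nonneg _))
    | true =>
      show |max (Lact1 p00 p10 ρ0 ρ1 β θ11 U x) (Lact0a p00 p10 β w θ01 U x)
          - max (Lact1 p00 p10 ρ0 ρ1 β θ11 U x') (Lact0a p00 p10 β w θ01 U x')|
            ≤ K * |x - x'|
      refine le_trans (abs_max_sub_max_le_max _ _ _ _) (max_le ?_ ?_)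
      · exact le_trans
          (stepL1 p00 p10 ρ0 ρ1 β θ11 K hp00 hp10 hρ0 hρ01 hρ1 hβ0 hθ11 hK0 U hU hx hx')
          (le_of_eq (hL1K _))
      · exact le_trans (stepL0 p00 p10 β w θ01 K hp00 hp10 hβ0 hθ01 U hU hx hx')
          (hβdK _ (abs_nonneg _))
  set T := TwOp p00 p10 ρ0 ρ1 β w θ11 θ01 θ00 with hT
  have hfix : ∀ x ∈ Icc (0:ℝ) 1, ∀ y, T V x y = V x y := hVfix
  set f : ℕ → ℝ → Bool → ℝ := fun n => T^[n] (fun _ _ => 0) with hf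
  have hfsucc : ∀ n, f (n + 1) = T (f n) := by
    intro n
    simp only [hf]
    exact Function.iterate_succ_apply' T n _
  have hfLip : ∀ n, ∀ x ∈ Icc (0:ℝ) 1, ∀ x' ∈ Icc (0:ℝ) 1, ∀ y,
      |f n x y - f n x' y| ≤ K * |x - x'| := by
    intro n
    induction n with
    | zero =>
      intro x hx x' hx' y
      simp only [hf, Function.iterate_zero, id_eq]
      simpa using mul_nonneg hK0 (abs_nonneg (x - x'))
    | succ n ih =>
      rw [hfsucc n]
      exact Tstep (f n) ih
  have hfV : ∀ n, ∀ x ∈ Icc (0:ℝ) 1, ∀ y, |f n x y - V x y| ≤ β ^ n * C := by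
    intro n
    induction n with
    | zero =>
      intro x hx y
      simp only [hf, Function.iterate_zero, id_eq, pow_zero, one_mul]
      simpa using hC x hx y
    | succ n ih =>
      intro x hx y
      rw [hfsucc n, ← hfix x hx y]
      calc |T (f n) x y - T V x y| ≤ β * (β ^ n * C) :=
            contractT p00 p10 ρ0 ρ1 β w θ11 θ01 θ00 hp00 hp10 hρ0 hρ01 hρ1 hβ0
              hθ11 hθ01 hθ00 (f n) V (β ^ n * C) ih x hx y
        _ = β ^ (n + 1) * C := by ring
  -- pass to the limit: V is K-Lipschitz on [0,1]
  have hVLip : ∀ x ∈ Icc (0:ℝ) 1, ∀ x' ∈ Icc (0:ℝ) 1, ∀ y,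
      |V x y - V x' y| ≤ K * |x - x'| := by
    intro x hx x' hx' y
    have hten : Tendsto (fun n : ℕ => K * |x - x'| + 2 * (β ^ n * C)) atTop
        (𝓝 (K * |x - x'|)) := by
      have h0 : Tendsto (fun n : ℕ => β ^ n) atTop (𝓝 0) :=
        tendsto_pow_atTop_nhds_zero_of_lt_one hβ0 hβ.2
      have h1 : Tendsto (fun n : ℕ => 2 * (β ^ n * C)) atTop (𝓝 (2 * (0 * C))) :=
        (h0.mul_const C).const_mul 2
      have h2 : Tendsto (fun n : ℕ => K * |x - x'| + 2 * (β ^ n * C)) atTop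
          (𝓝 (K * |x - x'| + 2 * (0 * C))) := Tendsto.add tendsto_const_nhds h1
      simpa using h2
    refine ge_of_tendsto' hten ?_
    intro n
    have h1 := hfV n x hx y
    have h2 := hfV n x' hx' y
    have h3 := hfLip n x hx x' hx' y
    calc |V x y - V x' y|
        ≤ |V x y - f n x y| + |f n x y - V x' y| := abs_sub_le _ _ _
      _ ≤ |V x y - f n x y| + (|f n x y - f n x' y| + |f n x' y - V x' y|) :=
          add_le_add_right (abs_sub_le _ _ _) _
      _ ≤ β ^ n * C + (K * |x - x'| + β ^ n * C) := by
          rw [abs_sub_comm (V x y)]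
          exact add_le_add h1 (add_le_add h3 h2)
      _ = K * |x - x'| + 2 * (β ^ n * C) := by ring
  intro π hπ π' hπ'
  refine ⟨?_, ?_, hVLip π hπ π' hπ' true⟩
  · exact le_trans (stepL0 p00 p10 β w θ01 K hp00 hp10 hβ0 hθ01 V hVLip hπ hπ')
      (hβdK _ (abs_nonneg _))
  · exact le_trans
      (stepL1 p00 p10 ρ0 ρ1 β θ11 K hp00 hp10 hρ0 hρ01 hρ1 hβ0 hθ11 hK0 V hVLip hπ hπ')
      (le_of_eq (hL1K _))
end
end

section
/- (Lipschitz preservation by the Bellman operator — induction step.) Assume either 0 < p00 − p10 < 1/2 or 0 < p10 − p00 < 1, and set κ = 1/(1 − β|p00 − p10|). If V : [0,1]×{0,1} → ℝ is bounded and π ↦ V(π, y) is Lipschitz with constant κ(ρ1 − ρ0) for each y ∈ {0,1}, then π ↦ (T_wV)(π, 1) and π ↦ (T_wV)(π, 0) are also Lipschitz on [0,1] with constant κ(ρ1 − ρ0). -/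
open Set

noncomputable section

set_option maxHeartbeats 2000000

/-- **Lipschitz preservation by the Bellman operator.** Under
`0 < p00 − p10 < 1/2` or `0 < p10 − p00 < 1`, with
`κ = 1/(1 − β|p00 − p10|)`: if `V` is bounded and `π ↦ V(π,y)` is
`κ(ρ1 − ρ0)`-Lipschitz on `[0,1]` for each `y`, then so are
`π ↦ (T_w V)(π,1)` and `π ↦ (T_w V)(π,0)`. -/
theorem stmt8 (p00 p10 ρ0 ρ1 β w θ11 θ01 θ00 : ℝ)
    (hp00 : p00 ∈ Icc (0:ℝ) 1) (hp10 : p10 ∈ Icc (0:ℝ) 1)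
    (hρ0 : 0 < ρ0) (hρ01 : ρ0 < ρ1) (hρ1 : ρ1 < 1)
    (hβ : β ∈ Ioo (0:ℝ) 1)
    (hθ11 : θ11 ∈ Icc (0:ℝ) 1) (hθ01 : θ01 ∈ Icc (0:ℝ) 1) (hθ00 : θ00 ∈ Icc (0:ℝ) 1)
    (hp : (0 < p00 - p10 ∧ p00 - p10 < 1/2) ∨ (0 < p10 - p00 ∧ p10 - p00 < 1))
    (V : ℝ → Bool → ℝ) (hVb : BddOnIcc V)
    (hVlip : ∀ y : Bool, ∀ π ∈ Icc (0:ℝ) 1, ∀ π' ∈ Icc (0:ℝ) 1,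
      |V π y - V π' y| ≤ (1 / (1 - β * |p00 - p10|)) * (ρ1 - ρ0) * |π - π'|) :
    ∀ y : Bool, ∀ π ∈ Icc (0:ℝ) 1, ∀ π' ∈ Icc (0:ℝ) 1,
      |TwOp p00 p10 ρ0 ρ1 β w θ11 θ01 θ00 V π y -
        TwOp p00 p10 ρ0 ρ1 β w θ11 θ01 θ00 V π' y|
        ≤ (1 / (1 - β * |p00 - p10|)) * (ρ1 - ρ0) * |π - π'| := by
  obtain ⟨hβ0, hβ1⟩ := hβ
  obtain ⟨hp000, hp001⟩ := hp00
  obtain ⟨hp100, hp101⟩ := hp10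
  set D := |p00 - p10| with hDdef
  have hD0 : 0 ≤ D := abs_nonneg _
  have hD1 : D < 1 := by
    rcases hp with ⟨h1, h2⟩ | ⟨h1, h2⟩
    · rw [hDdef, abs_of_pos h1]; linarith
    · rw [hDdef, abs_of_neg (by linarith : p00 - p10 < 0)]; linarith
  have hβD : β * D < 1 := by nlinarith
  have hden : (0:ℝ) < 1 - β * D := by linarith
  set L := 1 / (1 - β * D) * (ρ1 - ρ0) with hLdef
  have hL0 : 0 < L := by
    apply mul_pos (by positivity) (by linarith)
  have hLeq : L = (ρ1 - ρ0) + β * D * L := by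
    rw [hLdef]; field_simp; ring
  -- Lipschitz property of the averaged value function
  have hA : ∀ θ : ℝ, θ ∈ Icc (0:ℝ) 1 → ∀ x ∈ Icc (0:ℝ) 1, ∀ x' ∈ Icc (0:ℝ) 1,
      |(θ * V x true + (1 - θ) * V x false) - (θ * V x' true + (1 - θ) * V x' false)|
        ≤ L * |x - x'| := by
    intro θ hθ x hx x' hx'
    have h1 := hVlip true x hx x' hx'
    have h0 := hVlip false x hx x' hx'
    have e : (θ * V x true + (1 - θ) * V x false) - (θ * V x' true + (1 - θ) * V x' false)
        = θ * (V x true - V x' true) + (1 - θ) * (V x false - V x' false) := by ring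
    rw [e]
    have t1 : |θ * (V x true - V x' true) + (1 - θ) * (V x false - V x' false)|
        ≤ |θ * (V x true - V x' true)| + |(1 - θ) * (V x false - V x' false)| := abs_add_le _ _
    rw [abs_mul, abs_mul, abs_of_nonneg hθ.1, abs_of_nonneg (by linarith [hθ.2] : (0:ℝ) ≤ 1 - θ)] at t1
    nlinarith [hθ.1, hθ.2, abs_nonneg (V x true - V x' true), abs_nonneg (V x false - V x' false)]
  -- the no-play update
  have hgam_mem : ∀ π ∈ Icc (0:ℝ) 1, gam p00 p10 π ∈ Icc (0:ℝ) 1 := by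
    intro π hπ
    unfold gam
    constructor
    · nlinarith [hπ.1, hπ.2]
    · nlinarith [hπ.1, hπ.2]
  have hgam_diff : ∀ π π' : ℝ, |gam p00 p10 π - gam p00 p10 π'| = D * |π - π'| := by
    intro π π'
    rw [show gam p00 p10 π - gam p00 p10 π' = (p00 - p10) * (π - π') by unfold gam; ring,
      abs_mul, hDdef]
  -- generic passive-action bound
  have hpassive : ∀ θ : ℝ, θ ∈ Icc (0:ℝ) 1 → ∀ π ∈ Icc (0:ℝ) 1, ∀ π' ∈ Icc (0:ℝ) 1,
      |(w + β * (θ * V (gam p00 p10 π) true + (1 - θ) * V (gam p00 p10 π) false)) -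
        (w + β * (θ * V (gam p00 p10 π') true + (1 - θ) * V (gam p00 p10 π') false))|
        ≤ L * |π - π'| := by
    intro θ hθ π hπ π' hπ'
    have h := hA θ hθ (gam p00 p10 π) (hgam_mem π hπ) (gam p00 p10 π') (hgam_mem π' hπ')
    rw [hgam_diff π π'] at h
    have e : (w + β * (θ * V (gam p00 p10 π) true + (1 - θ) * V (gam p00 p10 π) false)) -
        (w + β * (θ * V (gam p00 p10 π') true + (1 - θ) * V (gam p00 p10 π') false))
        = β * ((θ * V (gam p00 p10 π) true + (1 - θ) * V (gam p00 p10 π) false) -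
            (θ * V (gam p00 p10 π') true + (1 - θ) * V (gam p00 p10 π') false)) := by ring
    rw [e, abs_mul, abs_of_pos hβ0]
    have : β * |(θ * V (gam p00 p10 π) true + (1 - θ) * V (gam p00 p10 π) false) -
        (θ * V (gam p00 p10 π') true + (1 - θ) * V (gam p00 p10 π') false)|
        ≤ β * (L * (D * |π - π'|)) := by
      exact mul_le_mul_of_nonneg_left h hβ0.le
    refine this.trans ?_
    nlinarith [abs_nonneg (π - π'), hβD, hL0, mul_nonneg hL0.le (abs_nonneg (π - π'))]
  -- active-action bound
  have hactive : ∀ π ∈ Icc (0:ℝ) 1, ∀ π' ∈ Icc (0:ℝ) 1,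
      |Lact1 p00 p10 ρ0 ρ1 β θ11 V π - Lact1 p00 p10 ρ0 ρ1 β θ11 V π'| ≤ L * |π - π'| := by
    intro π hπ π' hπ'
    obtain ⟨hπ0, hπ1⟩ := hπ
    obtain ⟨hπ'0, hπ'1⟩ := hπ'
    have hrlow : ρ0 ≤ rhoB ρ0 ρ1 π := by unfold rhoB; nlinarith
    have hrhigh : rhoB ρ0 ρ1 π ≤ ρ1 := by unfold rhoB; nlinarith
    have hr'low : ρ0 ≤ rhoB ρ0 ρ1 π' := by unfold rhoB; nlinarith
    have hr'high : rhoB ρ0 ρ1 π' ≤ ρ1 := by unfold rhoB; nlinarith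
    have hrpos : 0 < rhoB ρ0 ρ1 π := lt_of_lt_of_le hρ0 hrlow
    have hr'pos : 0 < rhoB ρ0 ρ1 π' := lt_of_lt_of_le hρ0 hr'low
    have hr1 : rhoB ρ0 ρ1 π < 1 := lt_of_le_of_lt hrhigh hρ1
    have hr'1 : rhoB ρ0 ρ1 π' < 1 := lt_of_le_of_lt hr'high hρ1
    have hrne : rhoB ρ0 ρ1 π ≠ 0 := hrpos.ne'
    have hr'ne : rhoB ρ0 ρ1 π' ≠ 0 := hr'pos.ne'
    have h1rne : (1 : ℝ) - rhoB ρ0 ρ1 π ≠ 0 := ne_of_gt (by linarith)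
    have h1r'ne : (1 : ℝ) - rhoB ρ0 ρ1 π' ≠ 0 := ne_of_gt (by linarith)
    -- membership of the updates
    have hG1mem : ∀ σ ∈ Icc (0:ℝ) 1, Gam1 p00 p10 ρ0 ρ1 σ ∈ Icc (0:ℝ) 1 := by
      intro σ hσ
      obtain ⟨hσ0, hσ1⟩ := hσ
      have hd : 0 < σ * ρ0 + (1 - σ) * ρ1 := by nlinarith
      have e1 : σ * ρ0 * p00 ≤ σ * ρ0 * 1 :=
        mul_le_mul_of_nonneg_left hp001 (mul_nonneg hσ0 hρ0.le)
      have e2 : (1 - σ) * ρ1 * p10 ≤ (1 - σ) * ρ1 * 1 :=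
        mul_le_mul_of_nonneg_left hp101 (mul_nonneg (by linarith) (by linarith))
      have e3 : 0 ≤ σ * ρ0 * p00 := mul_nonneg (mul_nonneg hσ0 hρ0.le) hp000
      have e4 : 0 ≤ (1 - σ) * ρ1 * p10 :=
        mul_nonneg (mul_nonneg (by linarith) (by linarith)) hp100
      unfold Gam1
      constructor
      · apply div_nonneg _ hd.le
        linarith
      · rw [div_le_one hd]
        linarith
    have hG0mem : ∀ σ ∈ Icc (0:ℝ) 1, Gam0 p00 p10 ρ0 ρ1 σ ∈ Icc (0:ℝ) 1 := by
      intro σ hσ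
      obtain ⟨hσ0, hσ1⟩ := hσ
      have hd : 0 < σ * (1 - ρ0) + (1 - σ) * (1 - ρ1) := by nlinarith
      have e1 : σ * (1 - ρ0) * p00 ≤ σ * (1 - ρ0) * 1 :=
        mul_le_mul_of_nonneg_left hp001 (mul_nonneg hσ0 (by linarith))
      have e2 : (1 - σ) * (1 - ρ1) * p10 ≤ (1 - σ) * (1 - ρ1) * 1 :=
        mul_le_mul_of_nonneg_left hp101 (mul_nonneg (by linarith) (by linarith))
      have e3 : 0 ≤ σ * (1 - ρ0) * p00 := mul_nonneg (mul_nonneg hσ0 (by linarith)) hp000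
      have e4 : 0 ≤ (1 - σ) * (1 - ρ1) * p10 :=
        mul_nonneg (mul_nonneg (by linarith) (by linarith)) hp100
      unfold Gam0
      constructor
      · apply div_nonneg _ hd.le
        linarith
      · rw [div_le_one hd]
        linarith
    -- difference identities
    have hrd : rhoB ρ0 ρ1 π - rhoB ρ0 ρ1 π' = (ρ1 - ρ0) * (π' - π) := by
      unfold rhoB; ring
    have hrdenπ : π * ρ0 + (1 - π) * ρ1 ≠ 0 := by
      have : rhoB ρ0 ρ1 π = π * ρ0 + (1 - π) * ρ1 := rfl
      rw [← this]; exact hrne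
    have hrdenπ' : π' * ρ0 + (1 - π') * ρ1 ≠ 0 := by
      have : rhoB ρ0 ρ1 π' = π' * ρ0 + (1 - π') * ρ1 := rfl
      rw [← this]; exact hr'ne
    have h1rdenπ : π * (1 - ρ0) + (1 - π) * (1 - ρ1) ≠ 0 := by
      have : (1:ℝ) - rhoB ρ0 ρ1 π = π * (1 - ρ0) + (1 - π) * (1 - ρ1) := by unfold rhoB; ring
      rw [← this]; exact h1rne
    have h1rdenπ' : π' * (1 - ρ0) + (1 - π') * (1 - ρ1) ≠ 0 := by
      have : (1:ℝ) - rhoB ρ0 ρ1 π' = π' * (1 - ρ0) + (1 - π') * (1 - ρ1) := by unfold rhoB; ring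
      rw [← this]; exact h1r'ne
    have hG1d : Gam1 p00 p10 ρ0 ρ1 π - Gam1 p00 p10 ρ0 ρ1 π'
        = ρ0 * ρ1 * (p00 - p10) * (π - π') / (rhoB ρ0 ρ1 π * rhoB ρ0 ρ1 π') := by
      rw [eq_div_iff (mul_ne_zero hrne hr'ne)]
      unfold Gam1 rhoB
      rw [div_sub_div _ _ hrdenπ hrdenπ', div_mul_eq_mul_div, div_eq_iff (mul_ne_zero hrdenπ hrdenπ')]
      ring
    have hG0d : Gam0 p00 p10 ρ0 ρ1 π - Gam0 p00 p10 ρ0 ρ1 π'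
        = (1 - ρ0) * (1 - ρ1) * (p00 - p10) * (π - π') /
            ((1 - rhoB ρ0 ρ1 π) * (1 - rhoB ρ0 ρ1 π')) := by
      rw [eq_div_iff (mul_ne_zero h1rne h1r'ne)]
      unfold Gam0 rhoB
      rw [div_sub_div _ _ h1rdenπ h1rdenπ', div_mul_eq_mul_div, div_eq_iff (mul_ne_zero h1rdenπ h1rdenπ')]
      ring
    have hGcross : Gam1 p00 p10 ρ0 ρ1 π' - Gam0 p00 p10 ρ0 ρ1 π'
        = -(π' * (1 - π') * (ρ1 - ρ0) * (p00 - p10)) /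
            (rhoB ρ0 ρ1 π' * (1 - rhoB ρ0 ρ1 π')) := by
      rw [eq_div_iff (mul_ne_zero hr'ne h1r'ne)]
      unfold Gam1 Gam0 rhoB
      field_simp [hrdenπ', h1rdenπ']
      ring
    -- abbreviations for the averaged values
    set a1 := θ11 * V (Gam1 p00 p10 ρ0 ρ1 π) true + (1 - θ11) * V (Gam1 p00 p10 ρ0 ρ1 π) false with ha1
    set a1' := θ11 * V (Gam1 p00 p10 ρ0 ρ1 π') true + (1 - θ11) * V (Gam1 p00 p10 ρ0 ρ1 π') false with ha1'
    set a0 := θ11 * V (Gam0 p00 p10 ρ0 ρ1 π) true + (1 - θ11) * V (Gam0 p00 p10 ρ0 ρ1 π) false with ha0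
    set a0' := θ11 * V (Gam0 p00 p10 ρ0 ρ1 π') true + (1 - θ11) * V (Gam0 p00 p10 ρ0 ρ1 π') false with ha0'
    set r := rhoB ρ0 ρ1 π with hrdef
    set r' := rhoB ρ0 ρ1 π' with hr'def
    -- Lipschitz bounds from hA
    have hb1 : |a1 - a1'| ≤ L * (ρ0 * ρ1 * D * |π - π'| / (r * r')) := by
      have h := hA θ11 hθ11 _ (hG1mem π ⟨hπ0, hπ1⟩) _ (hG1mem π' ⟨hπ'0, hπ'1⟩)
      rw [hG1d] at h
      rw [abs_div, abs_mul, abs_mul, abs_mul, abs_of_pos hρ0,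
        abs_of_pos (hρ0.trans hρ01), abs_of_pos (mul_pos hrpos hr'pos), ← hDdef] at h
      exact le_of_le_of_eq h (by rw [mul_div_assoc])
    have hb0 : |a0 - a0'| ≤ L * ((1 - ρ0) * (1 - ρ1) * D * |π - π'| / ((1 - r) * (1 - r'))) := by
      have h := hA θ11 hθ11 _ (hG0mem π ⟨hπ0, hπ1⟩) _ (hG0mem π' ⟨hπ'0, hπ'1⟩)
      rw [hG0d] at h
      rw [abs_div, abs_mul, abs_mul, abs_mul,
        abs_of_pos (by linarith [hρ01] : (0:ℝ) < 1 - ρ0),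
        abs_of_pos (by linarith : (0:ℝ) < 1 - ρ1),
        abs_of_pos (mul_pos (by linarith : (0:ℝ) < 1 - r) (by linarith : (0:ℝ) < 1 - r')),
        ← hDdef] at h
      exact le_of_le_of_eq h (by rw [mul_div_assoc])
    have hbc : |a1' - a0'| ≤ L * (π' * (1 - π') * (ρ1 - ρ0) * D / (r' * (1 - r'))) := by
      have h := hA θ11 hθ11 _ (hG1mem π' ⟨hπ'0, hπ'1⟩) _ (hG0mem π' ⟨hπ'0, hπ'1⟩)
      rw [hGcross] at h
      rw [abs_div, abs_neg, abs_mul, abs_mul, abs_mul,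
        abs_of_nonneg hπ'0, abs_of_nonneg (by linarith : (0:ℝ) ≤ 1 - π'),
        abs_of_pos (by linarith : (0:ℝ) < ρ1 - ρ0),
        abs_of_pos (mul_pos hr'pos (by linarith : (0:ℝ) < 1 - r')), ← hDdef] at h
      exact le_of_le_of_eq h (by rw [mul_div_assoc])
    have hbrd : |r - r'| = (ρ1 - ρ0) * |π - π'| := by
      rw [hrd, abs_mul, abs_of_pos (by linarith : (0:ℝ) < ρ1 - ρ0), abs_sub_comm π' π]
    -- decomposition
    have hdec : Lact1 p00 p10 ρ0 ρ1 β θ11 V π - Lact1 p00 p10 ρ0 ρ1 β θ11 V π'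
        = (r - r') + β * ((r - r') * (a1' - a0') + r * (a1 - a1') + (1 - r) * (a0 - a0')) := by
      simp only [Lact1, ← ha1, ← ha1', ← ha0, ← ha0', ← hrdef, ← hr'def]
      ring
    rw [hdec]
    have htri : |(r - r') + β * ((r - r') * (a1' - a0') + r * (a1 - a1') + (1 - r) * (a0 - a0'))|
        ≤ |r - r'| + β * (|r - r'| * |a1' - a0'| + r * |a1 - a1'| + (1 - r) * |a0 - a0'|) := by
      have hY : |(r - r') * (a1' - a0') + r * (a1 - a1') + (1 - r) * (a0 - a0')|
          ≤ |r - r'| * |a1' - a0'| + r * |a1 - a1'| + (1 - r) * |a0 - a0'| := by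
        have t1 := abs_add_le ((r - r') * (a1' - a0') + r * (a1 - a1')) ((1 - r) * (a0 - a0'))
        have t2 := abs_add_le ((r - r') * (a1' - a0')) (r * (a1 - a1'))
        rw [abs_mul (r - r') (a1' - a0'), abs_mul r (a1 - a1'), abs_mul (1 - r) (a0 - a0'),
          abs_of_pos hrpos, abs_of_pos (by linarith : (0:ℝ) < 1 - r)] at *
        linarith
      calc |(r - r') + β * ((r - r') * (a1' - a0') + r * (a1 - a1') + (1 - r) * (a0 - a0'))|
          ≤ |r - r'| + |β * ((r - r') * (a1' - a0') + r * (a1 - a1') + (1 - r) * (a0 - a0'))| :=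
            abs_add_le _ _
        _ = |r - r'| + β * |(r - r') * (a1' - a0') + r * (a1 - a1') + (1 - r) * (a0 - a0')| := by
            rw [abs_mul, abs_of_pos hβ0]
        _ ≤ |r - r'| + β * (|r - r'| * |a1' - a0'| + r * |a1 - a1'| + (1 - r) * |a0 - a0'|) := by
            nlinarith [hY, hβ0.le]
    refine htri.trans ?_
    -- the key summation identity
    have hsum : (ρ1 - ρ0) * |π - π'| * (L * (π' * (1 - π') * (ρ1 - ρ0) * D / (r' * (1 - r'))))
        + r * (L * (ρ0 * ρ1 * D * |π - π'| / (r * r')))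
        + (1 - r) * (L * ((1 - ρ0) * (1 - ρ1) * D * |π - π'| / ((1 - r) * (1 - r'))))
        = L * D * |π - π'| := by
      have hne1r' : 1 - (π' * ρ0 + (1 - π') * ρ1) ≠ 0 := by
        have : rhoB ρ0 ρ1 π' = π' * ρ0 + (1 - π') * ρ1 := rfl
        rw [← this]; exact h1r'ne
      rw [hr'def]
      unfold rhoB
      have hA1 : r * (L * (ρ0 * ρ1 * D * |π - π'| / (r * (π' * ρ0 + (1 - π') * ρ1))))
          = L * (ρ0 * ρ1 * D * |π - π'|) / (π' * ρ0 + (1 - π') * ρ1) := by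
        rw [mul_div_assoc', mul_div_assoc', mul_div_mul_left _ _ hrne]
      have hA2 : (1 - r) * (L * ((1 - ρ0) * (1 - ρ1) * D * |π - π'| / ((1 - r) * (1 - (π' * ρ0 + (1 - π') * ρ1)))))
          = L * ((1 - ρ0) * (1 - ρ1) * D * |π - π'|) / (1 - (π' * ρ0 + (1 - π') * ρ1)) := by
        rw [mul_div_assoc', mul_div_assoc', mul_div_mul_left _ _ h1rne]
      rw [hA1, hA2, mul_div_assoc', mul_div_assoc', div_add_div _ _ (mul_ne_zero hrdenπ' hne1r') hrdenπ', div_add_div _ _ (mul_ne_zero (mul_ne_zero hrdenπ' hne1r') hrdenπ') hne1r', div_eq_iff (mul_ne_zero (mul_ne_zero (mul_ne_zero hrdenπ' hne1r') hrdenπ') hne1r')]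
      ring
    have hinner : |r - r'| * |a1' - a0'| + r * |a1 - a1'| + (1 - r) * |a0 - a0'|
        ≤ L * D * |π - π'| := by
      rw [hbrd]
      have h1 := mul_le_mul_of_nonneg_left hbc
        (mul_nonneg (by linarith : (0:ℝ) ≤ ρ1 - ρ0) (abs_nonneg (π - π')))
      have h2 := mul_le_mul_of_nonneg_left hb1 hrpos.le
      have h3 := mul_le_mul_of_nonneg_left hb0 (by linarith : (0:ℝ) ≤ 1 - r)
      linarith [hsum]
    have : |r - r'| + β * (|r - r'| * |a1' - a0'| + r * |a1 - a1'| + (1 - r) * |a0 - a0'|)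
        ≤ (ρ1 - ρ0) * |π - π'| + β * (L * D * |π - π'|) := by
      have h4 := mul_le_mul_of_nonneg_left hinner hβ0.le
      rw [hbrd] at h4 ⊢
      linarith
    refine this.trans ?_
    have : L * |π - π'| = (ρ1 - ρ0) * |π - π'| + β * (L * D * |π - π'|) := by
      linear_combination |π - π'| * hLeq
    linarith
  -- assemble
  intro y π hπ π' hπ'
  cases y with
  | false =>
    simp only [TwOp, Bool.false_eq_true, if_false]
    exact hpassive θ00 hθ00 π hπ π' hπ'
  | true =>
    simp only [TwOp, if_true]
    refine (abs_max_sub_max_le_max _ _ _ _).trans ?_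
    exact max_le (hactive π hπ π' hπ') (hpassive θ01 hθ01 π hπ π' hπ')
end
end

section
/- (At most one root of the advantage function.) Assume ρ1 > ρ0 and either 0 < p00 − p10 < 1/5 or 0 < p10 − p00 < 1/3. Then the advantage function D(π) := L1V_w(π,1) − L0V_w(π,1) has at most one root in (0,1): if π, π' ∈ (0,1) satisfy D(π) = D(π') = 0, then π = π'. -/
open Set

noncomputable section

open Filter

namespace S10


lemma rhoB_le {ρ0 ρ1 : ℝ} (h : ρ0 ≤ ρ1) {π : ℝ} (hπ : π ∈ Icc (0:ℝ) 1) :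
    ρ0 ≤ rhoB ρ0 ρ1 π ∧ rhoB ρ0 ρ1 π ≤ ρ1 := by
  obtain ⟨h0, h1⟩ := hπ
  unfold rhoB
  constructor <;> nlinarith

lemma rho_sub (ρ0 ρ1 π π' : ℝ) :
    rhoB ρ0 ρ1 π - rhoB ρ0 ρ1 π' = -((ρ1 - ρ0) * (π - π')) := by
  unfold rhoB; ring

lemma gam_mem {p00 p10 π : ℝ} (h0 : p00 ∈ Icc (0:ℝ) 1) (h1 : p10 ∈ Icc (0:ℝ) 1)
    (hπ : π ∈ Icc (0:ℝ) 1) : gam p00 p10 π ∈ Icc (0:ℝ) 1 := by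
  obtain ⟨a,b⟩ := h0; obtain ⟨c,d⟩ := h1; obtain ⟨e,f⟩ := hπ
  unfold gam; constructor <;> nlinarith

lemma gam_sub (p00 p10 π π' : ℝ) :
    gam p00 p10 π - gam p00 p10 π' = (p00 - p10) * (π - π') := by
  unfold gam; ring

lemma Gam1_mem {p00 p10 ρ0 ρ1 π : ℝ} (h0 : p00 ∈ Icc (0:ℝ) 1) (h1 : p10 ∈ Icc (0:ℝ) 1)
    (hρ0 : 0 < ρ0) (hρ01 : ρ0 ≤ ρ1) (hπ : π ∈ Icc (0:ℝ) 1) :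
    Gam1 p00 p10 ρ0 ρ1 π ∈ Icc (0:ℝ) 1 := by
  have hb := rhoB_le hρ01 hπ
  have hpos : 0 < π * ρ0 + (1 - π) * ρ1 := lt_of_lt_of_le hρ0 hb.1
  obtain ⟨a,b⟩ := h0; obtain ⟨c,d⟩ := h1; obtain ⟨e,f⟩ := hπ
  have h1 : 0 ≤ π * ρ0 := mul_nonneg e hρ0.le
  have h2 : (0:ℝ) ≤ (1 - π) * ρ1 := mul_nonneg (by linarith) (by linarith)
  unfold Gam1
  constructor
  · apply div_nonneg _ hpos.le; nlinarith [mul_nonneg h1 a, mul_nonneg h2 c]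
  · rw [div_le_one hpos]
    nlinarith [mul_nonneg h1 (by linarith : (0:ℝ) ≤ 1 - p00),
      mul_nonneg h2 (by linarith : (0:ℝ) ≤ 1 - p10)]

lemma Gam0_mem {p00 p10 ρ0 ρ1 π : ℝ} (h0 : p00 ∈ Icc (0:ℝ) 1) (h1 : p10 ∈ Icc (0:ℝ) 1)
    (hρ0 : 0 < ρ0) (hρ01 : ρ0 ≤ ρ1) (hρ1 : ρ1 < 1) (hπ : π ∈ Icc (0:ℝ) 1) :
    Gam0 p00 p10 ρ0 ρ1 π ∈ Icc (0:ℝ) 1 := by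
  obtain ⟨a,b⟩ := h0; obtain ⟨c,d⟩ := h1; obtain ⟨e,f⟩ := hπ
  have hpos : 0 < π * (1 - ρ0) + (1 - π) * (1 - ρ1) := by nlinarith
  have h1 : (0:ℝ) ≤ π * (1 - ρ0) := mul_nonneg e (by linarith)
  have h2 : (0:ℝ) ≤ (1 - π) * (1 - ρ1) := mul_nonneg (by linarith) (by linarith)
  unfold Gam0
  constructor
  · apply div_nonneg _ hpos.le; nlinarith [mul_nonneg h1 a, mul_nonneg h2 c]
  · rw [div_le_one hpos]
    nlinarith [mul_nonneg h1 (by linarith : (0:ℝ) ≤ 1 - p00),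
      mul_nonneg h2 (by linarith : (0:ℝ) ≤ 1 - p10)]

lemma Gam1_sub {p00 p10 ρ0 ρ1 π π' : ℝ} (ha : rhoB ρ0 ρ1 π ≠ 0) (ha' : rhoB ρ0 ρ1 π' ≠ 0) :
    Gam1 p00 p10 ρ0 ρ1 π - Gam1 p00 p10 ρ0 ρ1 π'
      = ρ0 * ρ1 * (p00 - p10) * (π - π') / (rhoB ρ0 ρ1 π * rhoB ρ0 ρ1 π') := by
  unfold Gam1 rhoB at *
  rw [div_sub_div _ _ ha ha']; congr 1; ring

lemma Gam0_sub {p00 p10 ρ0 ρ1 π π' : ℝ} (ha : (1:ℝ) - rhoB ρ0 ρ1 π ≠ 0)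
    (ha' : (1:ℝ) - rhoB ρ0 ρ1 π' ≠ 0) :
    Gam0 p00 p10 ρ0 ρ1 π - Gam0 p00 p10 ρ0 ρ1 π'
      = (1-ρ0) * (1-ρ1) * (p00 - p10) * (π - π') / ((1 - rhoB ρ0 ρ1 π) * (1 - rhoB ρ0 ρ1 π')) := by
  have e : ∀ x : ℝ, x * (1 - ρ0) + (1 - x) * (1 - ρ1) = 1 - rhoB ρ0 ρ1 x := by
    intro x; unfold rhoB; ring
  unfold Gam0
  rw [e, e]
  unfold rhoB at *
  rw [div_sub_div _ _ ha ha']; congr 1; ring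

lemma Gam10_sub {p00 p10 ρ0 ρ1 π : ℝ} (ha : rhoB ρ0 ρ1 π ≠ 0)
    (ha' : (1:ℝ) - rhoB ρ0 ρ1 π ≠ 0) :
    Gam1 p00 p10 ρ0 ρ1 π - Gam0 p00 p10 ρ0 ρ1 π
      = -((p00 - p10) * ((ρ1 - ρ0) * (π * (1 - π)))) / (rhoB ρ0 ρ1 π * (1 - rhoB ρ0 ρ1 π)) := by
  have e : π * (1 - ρ0) + (1 - π) * (1 - ρ1) = 1 - rhoB ρ0 ρ1 π := by
    unfold rhoB; ring
  unfold Gam1 Gam0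
  rw [e]
  unfold rhoB at *
  field_simp
  ring

lemma magic {ρ0 ρ1 π' : ℝ} (ha : rhoB ρ0 ρ1 π' ≠ 0) (ha' : (1:ℝ) - rhoB ρ0 ρ1 π' ≠ 0) :
    ρ0 * ρ1 / rhoB ρ0 ρ1 π' + (1-ρ0) * (1-ρ1) / (1 - rhoB ρ0 ρ1 π')
      + (ρ1-ρ0)^2 * (π' * (1-π')) / (rhoB ρ0 ρ1 π' * (1 - rhoB ρ0 ρ1 π')) = 1 := by
  unfold rhoB at *
  rw [div_add_div _ _ ha ha', ← add_div, div_eq_one_iff_eq (mul_ne_zero ha ha')]; ring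



def Wcomb (θ : ℝ) (V : ℝ → Bool → ℝ) (x : ℝ) : ℝ := θ * V x true + (1 - θ) * V x false

lemma Wcomb_diff {θ K E : ℝ} {V : ℝ → Bool → ℝ} (hθ : θ ∈ Icc (0:ℝ) 1)
    {x x' : ℝ} (hx : x ∈ Icc (0:ℝ) 1) (hx' : x' ∈ Icc (0:ℝ) 1)
    (h : ∀ z ∈ Icc (0:ℝ) 1, ∀ z' ∈ Icc (0:ℝ) 1, ∀ y, |V z y - V z' y| ≤ K * |z - z'| + E) :
    |Wcomb θ V x - Wcomb θ V x'| ≤ K * |x - x'| + E := by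
  have h1 := h x hx x' hx' true
  have h2 := h x hx x' hx' false
  have e : Wcomb θ V x - Wcomb θ V x'
      = θ * (V x true - V x' true) + (1-θ) * (V x false - V x' false) := by
    unfold Wcomb; ring
  calc |Wcomb θ V x - Wcomb θ V x'|
      ≤ |θ * (V x true - V x' true)| + |(1-θ) * (V x false - V x' false)| := by
        rw [e]; exact abs_add_le _ _
    _ = θ * |V x true - V x' true| + (1-θ) * |V x false - V x' false| := by
        rw [abs_mul, abs_mul, abs_of_nonneg hθ.1, abs_of_nonneg (show (0:ℝ) ≤ 1 - θ by linarith [hθ.2])]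
    _ ≤ θ * (K * |x - x'| + E) + (1-θ) * (K * |x - x'| + E) := by
        have := hθ.1; have := hθ.2
        gcongr <;> linarith
    _ = K * |x - x'| + E := by ring

lemma L1diff (p00 p10 ρ0 ρ1 β θ11 K E : ℝ) (V : ℝ → Bool → ℝ)
    (hp00 : p00 ∈ Icc (0:ℝ) 1) (hp10 : p10 ∈ Icc (0:ℝ) 1)
    (hρ0 : 0 < ρ0) (hρ01 : ρ0 < ρ1) (hρ1 : ρ1 < 1)
    (hβ : 0 ≤ β) (hθ11 : θ11 ∈ Icc (0:ℝ) 1)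
    (hK : 0 ≤ K) (hE : 0 ≤ E)
    (h : ∀ z ∈ Icc (0:ℝ) 1, ∀ z' ∈ Icc (0:ℝ) 1, ∀ y, |V z y - V z' y| ≤ K * |z - z'| + E)
    (π π' : ℝ) (hπ : π ∈ Icc (0:ℝ) 1) (hπ' : π' ∈ Icc (0:ℝ) 1) :
    |Lact1 p00 p10 ρ0 ρ1 β θ11 V π - Lact1 p00 p10 ρ0 ρ1 β θ11 V π'
      - (rhoB ρ0 ρ1 π - rhoB ρ0 ρ1 π')|
      ≤ β * (K * |p00 - p10| * |π - π'| + E + (ρ1 - ρ0) * E * |π - π'|) := by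
  have hr : (0:ℝ) < ρ1 - ρ0 := by linarith
  have hA := rhoB_le hρ01.le hπ
  have hA' := rhoB_le hρ01.le hπ'
  have ha0 : 0 < rhoB ρ0 ρ1 π := lt_of_lt_of_le hρ0 hA.1
  have ha0' : 0 < rhoB ρ0 ρ1 π' := lt_of_lt_of_le hρ0 hA'.1
  have ha1 : rhoB ρ0 ρ1 π < 1 := lt_of_le_of_lt hA.2 hρ1
  have ha1' : rhoB ρ0 ρ1 π' < 1 := lt_of_le_of_lt hA'.2 hρ1
  have hb1' : (0:ℝ) < 1 - rhoB ρ0 ρ1 π' := by linarith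
  have hg1 := Gam1_mem hp00 hp10 hρ0 hρ01.le hπ
  have hg1' := Gam1_mem hp00 hp10 hρ0 hρ01.le hπ'
  have hg0 := Gam0_mem hp00 hp10 hρ0 hρ01.le hρ1 hπ
  have hg0' := Gam0_mem hp00 hp10 hρ0 hρ01.le hρ1 hπ'
  have W1d := Wcomb_diff hθ11 hg1 hg1' h
  have W0d := Wcomb_diff hθ11 hg0 hg0' h
  have W10d := Wcomb_diff hθ11 hg1' hg0' h
  -- difference identities in abs form
  have e1 : |Gam1 p00 p10 ρ0 ρ1 π - Gam1 p00 p10 ρ0 ρ1 π'|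
      = ρ0 * ρ1 * |p00 - p10| * |π - π'| / (rhoB ρ0 ρ1 π * rhoB ρ0 ρ1 π') := by
    rw [Gam1_sub ha0.ne' ha0'.ne', abs_div, abs_mul, abs_mul, abs_mul,
      abs_of_pos hρ0, abs_of_pos (show (0:ℝ) < ρ1 by linarith),
      abs_of_pos (mul_pos ha0 ha0')]
  have e0 : |Gam0 p00 p10 ρ0 ρ1 π - Gam0 p00 p10 ρ0 ρ1 π'|
      = (1-ρ0) * (1-ρ1) * |p00 - p10| * |π - π'|
          / ((1 - rhoB ρ0 ρ1 π) * (1 - rhoB ρ0 ρ1 π')) := by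
    rw [Gam0_sub (by linarith) (by linarith), abs_div, abs_mul, abs_mul, abs_mul,
      abs_of_pos (show (0:ℝ) < 1 - ρ0 by linarith),
      abs_of_pos (show (0:ℝ) < 1 - ρ1 by linarith),
      abs_of_pos (mul_pos (by linarith) hb1')]
  have e10 : |Gam1 p00 p10 ρ0 ρ1 π' - Gam0 p00 p10 ρ0 ρ1 π'|
      = |p00 - p10| * ((ρ1 - ρ0) * (π' * (1 - π')))
          / (rhoB ρ0 ρ1 π' * (1 - rhoB ρ0 ρ1 π')) := by
    rw [Gam10_sub ha0'.ne' (by linarith), abs_div, abs_neg, abs_mul, abs_mul,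
      abs_of_pos hr,
      abs_of_nonneg (mul_nonneg hπ'.1 (by linarith [hπ'.2])),
      abs_of_pos (mul_pos ha0' hb1')]
  have eA : |rhoB ρ0 ρ1 π - rhoB ρ0 ρ1 π'| = (ρ1 - ρ0) * |π - π'| := by
    rw [rho_sub, abs_neg, abs_mul, abs_of_pos hr]
  -- the three partial bounds
  have hb1 : rhoB ρ0 ρ1 π * |Wcomb θ11 V (Gam1 p00 p10 ρ0 ρ1 π) - Wcomb θ11 V (Gam1 p00 p10 ρ0 ρ1 π')|
      ≤ K * (ρ0 * ρ1 / rhoB ρ0 ρ1 π') * (|p00 - p10| * |π - π'|) + rhoB ρ0 ρ1 π * E := by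
    have h1 := mul_le_mul_of_nonneg_left W1d ha0.le
    rw [e1] at h1
    refine h1.trans (le_of_eq ?_)
    field_simp
  have hb2 : (1 - rhoB ρ0 ρ1 π) * |Wcomb θ11 V (Gam0 p00 p10 ρ0 ρ1 π) - Wcomb θ11 V (Gam0 p00 p10 ρ0 ρ1 π')|
      ≤ K * ((1-ρ0) * (1-ρ1) / (1 - rhoB ρ0 ρ1 π')) * (|p00 - p10| * |π - π'|)
        + (1 - rhoB ρ0 ρ1 π) * E := by
    have h1 := mul_le_mul_of_nonneg_left W0d (by linarith : (0:ℝ) ≤ 1 - rhoB ρ0 ρ1 π)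
    rw [e0] at h1
    refine h1.trans (le_of_eq ?_)
    have h2 : (1 - rhoB ρ0 ρ1 π) ≠ 0 := by linarith
    field_simp
  have hb3 : (ρ1 - ρ0) * |π - π'|
        * |Wcomb θ11 V (Gam1 p00 p10 ρ0 ρ1 π') - Wcomb θ11 V (Gam0 p00 p10 ρ0 ρ1 π')|
      ≤ K * ((ρ1-ρ0)^2 * (π' * (1-π')) / (rhoB ρ0 ρ1 π' * (1 - rhoB ρ0 ρ1 π')))
          * (|p00 - p10| * |π - π'|) + (ρ1 - ρ0) * E * |π - π'| := by
    have h1 := mul_le_mul_of_nonneg_left W10d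
      (mul_nonneg hr.le (abs_nonneg (π - π')) : (0:ℝ) ≤ (ρ1 - ρ0) * |π - π'|)
    rw [e10] at h1
    refine h1.trans (le_of_eq ?_)
    field_simp
  have hmag := magic ha0'.ne' (by linarith : (1:ℝ) - rhoB ρ0 ρ1 π' ≠ 0)
  -- key algebraic decomposition
  have key : Lact1 p00 p10 ρ0 ρ1 β θ11 V π - Lact1 p00 p10 ρ0 ρ1 β θ11 V π'
      - (rhoB ρ0 ρ1 π - rhoB ρ0 ρ1 π')
      = β * (rhoB ρ0 ρ1 π * (Wcomb θ11 V (Gam1 p00 p10 ρ0 ρ1 π) - Wcomb θ11 V (Gam1 p00 p10 ρ0 ρ1 π'))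
          + (1 - rhoB ρ0 ρ1 π) * (Wcomb θ11 V (Gam0 p00 p10 ρ0 ρ1 π) - Wcomb θ11 V (Gam0 p00 p10 ρ0 ρ1 π'))
          + (rhoB ρ0 ρ1 π - rhoB ρ0 ρ1 π')
              * (Wcomb θ11 V (Gam1 p00 p10 ρ0 ρ1 π') - Wcomb θ11 V (Gam0 p00 p10 ρ0 ρ1 π'))) := by
    unfold Lact1 Wcomb
    ring
  rw [key, abs_mul, abs_of_nonneg hβ]
  have hS : |rhoB ρ0 ρ1 π * (Wcomb θ11 V (Gam1 p00 p10 ρ0 ρ1 π) - Wcomb θ11 V (Gam1 p00 p10 ρ0 ρ1 π'))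
          + (1 - rhoB ρ0 ρ1 π) * (Wcomb θ11 V (Gam0 p00 p10 ρ0 ρ1 π) - Wcomb θ11 V (Gam0 p00 p10 ρ0 ρ1 π'))
          + (rhoB ρ0 ρ1 π - rhoB ρ0 ρ1 π')
              * (Wcomb θ11 V (Gam1 p00 p10 ρ0 ρ1 π') - Wcomb θ11 V (Gam0 p00 p10 ρ0 ρ1 π'))|
      ≤ K * |p00 - p10| * |π - π'| + E + (ρ1 - ρ0) * E * |π - π'| := by
    calc _ ≤ |rhoB ρ0 ρ1 π * (Wcomb θ11 V (Gam1 p00 p10 ρ0 ρ1 π) - Wcomb θ11 V (Gam1 p00 p10 ρ0 ρ1 π'))|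
          + |(1 - rhoB ρ0 ρ1 π) * (Wcomb θ11 V (Gam0 p00 p10 ρ0 ρ1 π) - Wcomb θ11 V (Gam0 p00 p10 ρ0 ρ1 π'))|
          + |(rhoB ρ0 ρ1 π - rhoB ρ0 ρ1 π')
              * (Wcomb θ11 V (Gam1 p00 p10 ρ0 ρ1 π') - Wcomb θ11 V (Gam0 p00 p10 ρ0 ρ1 π'))| :=
        abs_add_three _ _ _
      _ = rhoB ρ0 ρ1 π * |Wcomb θ11 V (Gam1 p00 p10 ρ0 ρ1 π) - Wcomb θ11 V (Gam1 p00 p10 ρ0 ρ1 π')|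
          + (1 - rhoB ρ0 ρ1 π) * |Wcomb θ11 V (Gam0 p00 p10 ρ0 ρ1 π) - Wcomb θ11 V (Gam0 p00 p10 ρ0 ρ1 π')|
          + (ρ1 - ρ0) * |π - π'|
              * |Wcomb θ11 V (Gam1 p00 p10 ρ0 ρ1 π') - Wcomb θ11 V (Gam0 p00 p10 ρ0 ρ1 π')| := by
        rw [abs_mul, abs_mul, abs_mul, abs_of_pos ha0,
          abs_of_pos (by linarith : (0:ℝ) < 1 - rhoB ρ0 ρ1 π), eA]
      _ ≤ (K * (ρ0 * ρ1 / rhoB ρ0 ρ1 π') * (|p00 - p10| * |π - π'|) + rhoB ρ0 ρ1 π * E)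
          + (K * ((1-ρ0) * (1-ρ1) / (1 - rhoB ρ0 ρ1 π')) * (|p00 - p10| * |π - π'|)
              + (1 - rhoB ρ0 ρ1 π) * E)
          + (K * ((ρ1-ρ0)^2 * (π' * (1-π')) / (rhoB ρ0 ρ1 π' * (1 - rhoB ρ0 ρ1 π')))
              * (|p00 - p10| * |π - π'|) + (ρ1 - ρ0) * E * |π - π'|) :=
        add_le_add (add_le_add hb1 hb2) hb3
      _ = (ρ0 * ρ1 / rhoB ρ0 ρ1 π' + (1-ρ0) * (1-ρ1) / (1 - rhoB ρ0 ρ1 π')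
            + (ρ1-ρ0)^2 * (π' * (1-π')) / (rhoB ρ0 ρ1 π' * (1 - rhoB ρ0 ρ1 π')))
            * (K * (|p00 - p10| * |π - π'|)) + E + (ρ1 - ρ0) * E * |π - π'| := by
        ring
      _ = K * |p00 - p10| * |π - π'| + E + (ρ1 - ρ0) * E * |π - π'| := by
        rw [hmag]; ring
  calc β * |_| ≤ β * (K * |p00 - p10| * |π - π'| + E + (ρ1 - ρ0) * E * |π - π'|) :=
        mul_le_mul_of_nonneg_left hS hβ
    _ = β * (K * |p00 - p10| * |π - π'| + E + (ρ1 - ρ0) * E * |π - π'|) := by ring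

lemma L0diff (p00 p10 β w θ K E : ℝ) (V : ℝ → Bool → ℝ)
    (hp00 : p00 ∈ Icc (0:ℝ) 1) (hp10 : p10 ∈ Icc (0:ℝ) 1)
    (hβ : 0 ≤ β) (hθ : θ ∈ Icc (0:ℝ) 1)
    (h : ∀ z ∈ Icc (0:ℝ) 1, ∀ z' ∈ Icc (0:ℝ) 1, ∀ y, |V z y - V z' y| ≤ K * |z - z'| + E)
    (π π' : ℝ) (hπ : π ∈ Icc (0:ℝ) 1) (hπ' : π' ∈ Icc (0:ℝ) 1) :
    |Lact0a p00 p10 β w θ V π - Lact0a p00 p10 β w θ V π'|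
      ≤ β * (K * |p00 - p10| * |π - π'| + E) := by
  have hWd := Wcomb_diff hθ (gam_mem hp00 hp10 hπ) (gam_mem hp00 hp10 hπ') h
  have key : Lact0a p00 p10 β w θ V π - Lact0a p00 p10 β w θ V π'
      = β * (Wcomb θ V (gam p00 p10 π) - Wcomb θ V (gam p00 p10 π')) := by
    unfold Lact0a Wcomb; ring
  rw [key, abs_mul, abs_of_nonneg hβ]
  have hg : |gam p00 p10 π - gam p00 p10 π'| = |p00 - p10| * |π - π'| := by
    rw [gam_sub, abs_mul]
  rw [hg] at hWd
  calc β * |Wcomb θ V (gam p00 p10 π) - Wcomb θ V (gam p00 p10 π')|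
      ≤ β * (K * (|p00 - p10| * |π - π'|) + E) := mul_le_mul_of_nonneg_left hWd hβ
    _ = β * (K * |p00 - p10| * |π - π'| + E) := by ring

lemma L0udiff (p00 p10 β w θ K E : ℝ) (V : ℝ → Bool → ℝ)
    (hp00 : p00 ∈ Icc (0:ℝ) 1) (hp10 : p10 ∈ Icc (0:ℝ) 1)
    (hβ : 0 ≤ β) (hθ : θ ∈ Icc (0:ℝ) 1)
    (h : ∀ z ∈ Icc (0:ℝ) 1, ∀ z' ∈ Icc (0:ℝ) 1, ∀ y, |V z y - V z' y| ≤ K * |z - z'| + E)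
    (π π' : ℝ) (hπ : π ∈ Icc (0:ℝ) 1) (hπ' : π' ∈ Icc (0:ℝ) 1) :
    |Lact0u p00 p10 β w θ V π - Lact0u p00 p10 β w θ V π'|
      ≤ β * (K * |p00 - p10| * |π - π'| + E) := by
  have hWd := Wcomb_diff hθ (gam_mem hp00 hp10 hπ) (gam_mem hp00 hp10 hπ') h
  have key : Lact0u p00 p10 β w θ V π - Lact0u p00 p10 β w θ V π'
      = β * (Wcomb θ V (gam p00 p10 π) - Wcomb θ V (gam p00 p10 π')) := by
    unfold Lact0u Wcomb; ring
  rw [key, abs_mul, abs_of_nonneg hβ]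
  have hg : |gam p00 p10 π - gam p00 p10 π'| = |p00 - p10| * |π - π'| := by
    rw [gam_sub, abs_mul]
  rw [hg] at hWd
  calc β * |Wcomb θ V (gam p00 p10 π) - Wcomb θ V (gam p00 p10 π')|
      ≤ β * (K * (|p00 - p10| * |π - π'|) + E) := mul_le_mul_of_nonneg_left hWd hβ
    _ = β * (K * |p00 - p10| * |π - π'| + E) := by ring

lemma onestep (p00 p10 ρ0 ρ1 β w θ11 θ01 θ00 K E : ℝ) (V : ℝ → Bool → ℝ)
    (hp00 : p00 ∈ Icc (0:ℝ) 1) (hp10 : p10 ∈ Icc (0:ℝ) 1)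
    (hρ0 : 0 < ρ0) (hρ01 : ρ0 < ρ1) (hρ1 : ρ1 < 1)
    (hβ : β ∈ Ioo (0:ℝ) 1)
    (hθ11 : θ11 ∈ Icc (0:ℝ) 1) (hθ01 : θ01 ∈ Icc (0:ℝ) 1) (hθ00 : θ00 ∈ Icc (0:ℝ) 1)
    (hVfix : FixedOnIcc (TwOp p00 p10 ρ0 ρ1 β w θ11 θ01 θ00) V)
    (hK : 0 ≤ K) (hE : 0 ≤ E)
    (h : ∀ z ∈ Icc (0:ℝ) 1, ∀ z' ∈ Icc (0:ℝ) 1, ∀ y, |V z y - V z' y| ≤ K * |z - z'| + E) :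
    ∀ π ∈ Icc (0:ℝ) 1, ∀ π' ∈ Icc (0:ℝ) 1, ∀ y,
      |V π y - V π' y|
        ≤ ((ρ1 - ρ0) + β * |p00 - p10| * K + β * (ρ1 - ρ0) * E) * |π - π'| + β * E := by
  intro π hπ π' hπ' y
  have hr : (0:ℝ) < ρ1 - ρ0 := by linarith
  cases y with
  | false =>
    have hfx := (hVfix π hπ false).symm
    have hfx' := (hVfix π' hπ' false).symm
    have e : V π false = Lact0u p00 p10 β w θ00 V π := by
      rw [hfx]; rfl
    have e' : V π' false = Lact0u p00 p10 β w θ00 V π' := by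
      rw [hfx']; rfl
    rw [e, e']
    refine (L0udiff p00 p10 β w θ00 K E V hp00 hp10 hβ.1.le hθ00 h π π' hπ hπ').trans ?_
    nlinarith [mul_nonneg hr.le (abs_nonneg (π - π')),
      mul_nonneg (mul_nonneg (mul_nonneg hβ.1.le hr.le) hE) (abs_nonneg (π - π'))]
  | true =>
    have e : V π true = max (Lact1 p00 p10 ρ0 ρ1 β θ11 V π) (Lact0a p00 p10 β w θ01 V π) := by
      rw [← hVfix π hπ true]; rfl
    have e' : V π' true = max (Lact1 p00 p10 ρ0 ρ1 β θ11 V π') (Lact0a p00 p10 β w θ01 V π') := by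
      rw [← hVfix π' hπ' true]; rfl
    rw [e, e']
    refine (abs_max_sub_max_le_max _ _ _ _).trans ?_
    have h1' := L1diff p00 p10 ρ0 ρ1 β θ11 K E V hp00 hp10 hρ0 hρ01 hρ1 hβ.1.le hθ11 hK hE h π π' hπ hπ'
    have h1 : |Lact1 p00 p10 ρ0 ρ1 β θ11 V π - Lact1 p00 p10 ρ0 ρ1 β θ11 V π'|
        ≤ ((ρ1 - ρ0) + β * |p00 - p10| * K + β * (ρ1 - ρ0) * E) * |π - π'| + β * E := by
      have habs : |Lact1 p00 p10 ρ0 ρ1 β θ11 V π - Lact1 p00 p10 ρ0 ρ1 β θ11 V π'|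
          ≤ |Lact1 p00 p10 ρ0 ρ1 β θ11 V π - Lact1 p00 p10 ρ0 ρ1 β θ11 V π'
              - (rhoB ρ0 ρ1 π - rhoB ρ0 ρ1 π')| + |rhoB ρ0 ρ1 π - rhoB ρ0 ρ1 π'| := by
        have := abs_add_le (Lact1 p00 p10 ρ0 ρ1 β θ11 V π - Lact1 p00 p10 ρ0 ρ1 β θ11 V π'
              - (rhoB ρ0 ρ1 π - rhoB ρ0 ρ1 π')) (rhoB ρ0 ρ1 π - rhoB ρ0 ρ1 π')
        simpa using this
      have heA : |rhoB ρ0 ρ1 π - rhoB ρ0 ρ1 π'| = (ρ1 - ρ0) * |π - π'| := by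
        rw [rho_sub, abs_neg, abs_mul, abs_of_pos hr]
      rw [heA] at habs
      refine habs.trans ?_
      refine (add_le_add h1' le_rfl).trans (le_of_eq ?_)
      ring
    have h0 := L0diff p00 p10 β w θ01 K E V hp00 hp10 hβ.1.le hθ01 h π π' hπ hπ'
    have h0' : |Lact0a p00 p10 β w θ01 V π - Lact0a p00 p10 β w θ01 V π'|
        ≤ ((ρ1 - ρ0) + β * |p00 - p10| * K + β * (ρ1 - ρ0) * E) * |π - π'| + β * E := by
      refine h0.trans ?_
      nlinarith [mul_nonneg hr.le (abs_nonneg (π - π')),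
      mul_nonneg (mul_nonneg (mul_nonneg hβ.1.le hr.le) hE) (abs_nonneg (π - π'))]
    exact max_le h1 h0'

lemma lipschitz (p00 p10 ρ0 ρ1 β w θ11 θ01 θ00 C : ℝ) (V : ℝ → Bool → ℝ)
    (hp00 : p00 ∈ Icc (0:ℝ) 1) (hp10 : p10 ∈ Icc (0:ℝ) 1)
    (hρ0 : 0 < ρ0) (hρ01 : ρ0 < ρ1) (hρ1 : ρ1 < 1)
    (hβ : β ∈ Ioo (0:ℝ) 1)
    (hθ11 : θ11 ∈ Icc (0:ℝ) 1) (hθ01 : θ01 ∈ Icc (0:ℝ) 1) (hθ00 : θ00 ∈ Icc (0:ℝ) 1)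
    (hdl : |p00 - p10| < 1)
    (hC : ∀ π ∈ Icc (0:ℝ) 1, ∀ y : Bool, |V π y| ≤ C)
    (hVfix : FixedOnIcc (TwOp p00 p10 ρ0 ρ1 β w θ11 θ01 θ00) V) :
    ∀ π ∈ Icc (0:ℝ) 1, ∀ π' ∈ Icc (0:ℝ) 1, ∀ y,
      |V π y - V π' y| ≤ ((ρ1 - ρ0) / (1 - β * |p00 - p10|)) * |π - π'| := by
  have hr : (0:ℝ) < ρ1 - ρ0 := by linarith
  have hC0 : 0 ≤ C := le_trans (abs_nonneg _) (hC 0 ⟨le_refl _, zero_le_one⟩ true)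
  have hdl0 : (0:ℝ) ≤ |p00 - p10| := abs_nonneg _
  have hβdl : β * |p00 - p10| < 1 := by nlinarith [hβ.1, hβ.2]
  have h1βdl : (0:ℝ) < 1 - β * |p00 - p10| := by linarith
  have h1dl : (0:ℝ) < 1 - |p00 - p10| := by linarith
  set Ks : ℝ := (ρ1 - ρ0) / (1 - β * |p00 - p10|) with hKs
  set Dc : ℝ := 2 * C * (ρ1 - ρ0) / (1 - |p00 - p10|) with hDc
  have hKs0 : 0 ≤ Ks := le_of_lt (div_pos hr h1βdl)
  have hDc0 : 0 ≤ Dc := div_nonneg (by nlinarith) h1dl.le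
  have main : ∀ n : ℕ, ∀ π ∈ Icc (0:ℝ) 1, ∀ π' ∈ Icc (0:ℝ) 1, ∀ y,
      |V π y - V π' y| ≤ (Ks + Dc * β ^ n) * |π - π'| + 2 * C * β ^ n := by
    intro n
    induction n with
    | zero =>
      intro π hπ π' hπ' y
      simp only [pow_zero, mul_one]
      have h1 := hC π hπ y
      have h2 := hC π' hπ' y
      have habs : |V π y - V π' y| ≤ 2 * C := by
        calc |V π y - V π' y| ≤ |V π y| + |V π' y| := abs_sub _ _
          _ ≤ 2 * C := by linarith
      have : (0:ℝ) ≤ (Ks + Dc) * |π - π'| :=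
        mul_nonneg (by linarith) (abs_nonneg _)
      linarith
    | succ n ih =>
      have hK' : (0:ℝ) ≤ Ks + Dc * β ^ n :=
        add_nonneg hKs0 (mul_nonneg hDc0 (pow_nonneg hβ.1.le n))
      have hE' : (0:ℝ) ≤ 2 * C * β ^ n :=
        mul_nonneg (by linarith) (pow_nonneg hβ.1.le n)
      have step := onestep p00 p10 ρ0 ρ1 β w θ11 θ01 θ00 (Ks + Dc * β ^ n) (2 * C * β ^ n) V
        hp00 hp10 hρ0 hρ01 hρ1 hβ hθ11 hθ01 hθ00 hVfix hK' hE' ih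
      intro π hπ π' hπ' y
      refine (step π hπ π' hπ' y).trans (le_of_eq ?_)
      have ecoef : (ρ1 - ρ0) + β * |p00 - p10| * (Ks + Dc * β ^ n)
          + β * (ρ1 - ρ0) * (2 * C * β ^ n) = Ks + Dc * β ^ (n+1) := by
        have e1 : Ks * (1 - β * |p00 - p10|) = ρ1 - ρ0 := by
          rw [hKs]; field_simp
        have e2 : Dc * (1 - |p00 - p10|) = 2 * C * (ρ1 - ρ0) := by
          rw [hDc]; field_simp
        linear_combination (-1 : ℝ) * e1 - β * β ^ n * e2
      rw [ecoef]
      ring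
  intro π hπ π' hπ' y
  have hpow : Tendsto (fun n : ℕ => β ^ n) atTop (nhds 0) :=
    tendsto_pow_atTop_nhds_zero_of_lt_one hβ.1.le hβ.2
  have hlim : Tendsto (fun n : ℕ => (Ks + Dc * β ^ n) * |π - π'| + 2 * C * β ^ n) atTop
      (nhds ((Ks + Dc * 0) * |π - π'| + 2 * C * 0)) := by
    exact ((tendsto_const_nhds.add (hpow.const_mul Dc)).mul_const _).add (hpow.const_mul (2 * C))
  have := ge_of_tendsto' hlim (fun n => main n π hπ π' hπ' y)
  simpa using this

end S10

/-- **At most one root of the advantage function.** If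
`ρ1 > ρ0` and either `0 < p00 − p10 < 1/5` or `0 < p10 − p00 < 1/3`, then the
advantage function `D(π) = L1 V_w(π,1) − L0 V_w(π,1)` has at most one root in
`(0,1)`. -/

theorem stmt10 (p00 p10 ρ0 ρ1 β w θ11 θ01 θ00 : ℝ)
    (hp00 : p00 ∈ Icc (0:ℝ) 1) (hp10 : p10 ∈ Icc (0:ℝ) 1)
    (hρ0 : 0 < ρ0) (hρ01 : ρ0 < ρ1) (hρ1 : ρ1 < 1)
    (hβ : β ∈ Ioo (0:ℝ) 1)
    (hθ11 : θ11 ∈ Icc (0:ℝ) 1) (hθ01 : θ01 ∈ Icc (0:ℝ) 1) (hθ00 : θ00 ∈ Icc (0:ℝ) 1)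
    (hp : (0 < p00 - p10 ∧ p00 - p10 < 1/5) ∨ (0 < p10 - p00 ∧ p10 - p00 < 1/3))
    (V : ℝ → Bool → ℝ) (hVb : BddOnIcc V)
    (hVfix : FixedOnIcc (TwOp p00 p10 ρ0 ρ1 β w θ11 θ01 θ00) V) :
    ∀ π ∈ Ioo (0:ℝ) 1, ∀ π' ∈ Ioo (0:ℝ) 1,
      Lact1 p00 p10 ρ0 ρ1 β θ11 V π - Lact0a p00 p10 β w θ01 V π = 0 →
      Lact1 p00 p10 ρ0 ρ1 β θ11 V π' - Lact0a p00 p10 β w θ01 V π' = 0 →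
      π = π' := by
  obtain ⟨C, hC⟩ := hVb
  have hr : (0:ℝ) < ρ1 - ρ0 := by linarith
  have hdl3 : |p00 - p10| < 1/3 := by
    rcases hp with ⟨h1, h2⟩ | ⟨h1, h2⟩
    · rw [abs_of_pos h1]; linarith
    · rw [abs_of_neg (by linarith : p00 - p10 < 0)]; linarith
  have hdl0 : (0:ℝ) ≤ |p00 - p10| := abs_nonneg _
  have hβdl : β * |p00 - p10| < 1/3 := by nlinarith [hβ.1, hβ.2]
  have h1βdl : (0:ℝ) < 1 - β * |p00 - p10| := by linarith
  have hLip := S10.lipschitz p00 p10 ρ0 ρ1 β w θ11 θ01 θ00 C V hp00 hp10 hρ0 hρ01 hρ1 hβ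
    hθ11 hθ01 hθ00 (by linarith) hC hVfix
  set Ks : ℝ := (ρ1 - ρ0) / (1 - β * |p00 - p10|) with hKsdef
  have hKs0 : 0 < Ks := div_pos hr h1βdl
  have hKseq : Ks * (1 - β * |p00 - p10|) = ρ1 - ρ0 := by
    rw [hKsdef]; field_simp
  have h0 : ∀ z ∈ Icc (0:ℝ) 1, ∀ z' ∈ Icc (0:ℝ) 1, ∀ y,
      |V z y - V z' y| ≤ Ks * |z - z'| + 0 := by
    intro z hz z' hz' y
    simpa using hLip z hz z' hz' y
  -- strict monotonicity of the advantage function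
  have mono : ∀ x ∈ Icc (0:ℝ) 1, ∀ x' ∈ Icc (0:ℝ) 1, x < x' →
      Lact1 p00 p10 ρ0 ρ1 β θ11 V x' - Lact0a p00 p10 β w θ01 V x'
        < Lact1 p00 p10 ρ0 ρ1 β θ11 V x - Lact0a p00 p10 β w θ01 V x := by
    intro x hx x' hx' hlt
    have hd : (0:ℝ) < x' - x := by linarith
    have habs : |x' - x| = x' - x := abs_of_pos hd
    have h1 := S10.L1diff p00 p10 ρ0 ρ1 β θ11 Ks 0 V hp00 hp10 hρ0 hρ01 hρ1 hβ.1.le hθ11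
      hKs0.le le_rfl h0 x' x hx' hx
    have h2 := S10.L0diff p00 p10 β w θ01 Ks 0 V hp00 hp10 hβ.1.le hθ01 h0 x' x hx' hx
    rw [habs] at h1 h2
    have hrs : rhoB ρ0 ρ1 x' - rhoB ρ0 ρ1 x = -((ρ1 - ρ0) * (x' - x)) := S10.rho_sub ρ0 ρ1 x' x
    have h1a := (abs_le.mp h1).2
    have h1b := (abs_le.mp h1).1
    have h2a := (abs_le.mp h2).2
    have h2b := (abs_le.mp h2).1
    rw [hrs] at h1a h1b
    have key : 2 * β * |p00 - p10| * Ks < ρ1 - ρ0 := by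
      nlinarith [hKs0, hβdl]
    nlinarith [mul_lt_mul_of_pos_right key hd, hβ.1.le]
  intro π hπ π' hπ' hroot hroot'
  have hπI : π ∈ Icc (0:ℝ) 1 := ⟨hπ.1.le, hπ.2.le⟩
  have hπI' : π' ∈ Icc (0:ℝ) 1 := ⟨hπ'.1.le, hπ'.2.le⟩
  rcases lt_trichotomy π π' with h | h | h
  · exfalso
    have := mono π hπI π' hπI' h
    rw [hroot, hroot'] at this
    exact lt_irrefl 0 this
  · exact h
  · exfalso
    have := mono π' hπI' π hπI h
    rw [hroot, hroot'] at this
    exact lt_irrefl 0 this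
end
end
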